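/- arXiv:1801.00691 — 6 statements merged into one kernel-verified Lean document; each statement's English description precedes it below -/
import Mathlib

section
/- Let Ω ⊆ ℝ² be open, g ∈ ℝ, and let u : ℝ × Ω → ℝ², D, q : ℝ × Ω → ℝ be twice continuously differentiable and f : Ω → ℝ be continuously differentiable. Suppose that on ℝ × Ω both the momentum equation ∂ₜu + (qD) u⊥ + ∇(½|u|² + g D) = 0 and the vorticity evolution equation ∂ₜ(qD) + ∇·(qD u) = 0 hold pointwise. Then ∂ₜ(qD − ∇⊥·u − f) = 0 on ℝ × Ω; in particular, if the diagnostic relation qD = ∇⊥·u + f holds at time t = 0, then it holds at all times. -/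
open Filter

namespace DiagAux

variable {F : ℝ × ℝ × ℝ → ℝ} {t x y : ℝ}

lemma curve_t (t x y : ℝ) : HasDerivAt (fun s : ℝ => ((s, x, y) : ℝ × ℝ × ℝ)) (1, 0, 0) t :=
  (hasDerivAt_id t).prodMk (hasDerivAt_const t (x, y))

lemma curve_x (t x y : ℝ) : HasDerivAt (fun a : ℝ => ((t, a, y) : ℝ × ℝ × ℝ)) (0, 1, 0) x :=
  (hasDerivAt_const x t).prodMk ((hasDerivAt_id x).prodMk (hasDerivAt_const x y))

lemma curve_y (t x y : ℝ) : HasDerivAt (fun b : ℝ => ((t, x, b) : ℝ × ℝ × ℝ)) (0, 0, 1) y :=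
  (hasDerivAt_const y t).prodMk ((hasDerivAt_const y x).prodMk (hasDerivAt_id y))

lemma slice_t (hF : DifferentiableAt ℝ F (t, x, y)) :
    HasDerivAt (fun s => F (s, x, y)) (fderiv ℝ F (t, x, y) (1, 0, 0)) t :=
  hF.hasFDerivAt.comp_hasDerivAt t (curve_t t x y)

lemma slice_x (hF : DifferentiableAt ℝ F (t, x, y)) :
    HasDerivAt (fun a => F (t, a, y)) (fderiv ℝ F (t, x, y) (0, 1, 0)) x :=
  hF.hasFDerivAt.comp_hasDerivAt x (curve_x t x y)

lemma slice_y (hF : DifferentiableAt ℝ F (t, x, y)) :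
    HasDerivAt (fun b => F (t, x, b)) (fderiv ℝ F (t, x, y) (0, 0, 1)) y :=
  hF.hasFDerivAt.comp_hasDerivAt y (curve_y t x y)

lemma second_slice {c : ℝ → ℝ × ℝ × ℝ} {v : ℝ × ℝ × ℝ} {s0 : ℝ}
    (hc : HasDerivAt c v s0) (hF' : DifferentiableAt ℝ (fderiv ℝ F) (c s0)) (w : ℝ × ℝ × ℝ) :
    HasDerivAt (fun s => fderiv ℝ F (c s) w) (fderiv ℝ (fderiv ℝ F) (c s0) v w) s0 := by
  have h := (hF'.hasFDerivAt.comp_hasDerivAt s0 hc).clm_apply (hasDerivAt_const s0 w)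
  simpa using h

end DiagAux

/-- The absolute vorticity `∇⊥·u + f = ∂₁u₂ − ∂₂u₁ + f` of the velocity field
`u = (u1, u2)` with Coriolis parameter `f`, at time `t` and point `(x, y)`. -/
noncomputable def absVort (u1 u2 : ℝ → ℝ → ℝ → ℝ) (f : ℝ → ℝ → ℝ) (t x y : ℝ) : ℝ :=
  deriv (fun a => u2 t a y) x - deriv (fun b => u1 t x b) y + f x y

open DiagAux in
private lemma diag_key
    (Ω : Set (ℝ × ℝ)) (hΩ : IsOpen Ω) (g : ℝ)
    (u1 u2 D q : ℝ → ℝ → ℝ → ℝ) (f : ℝ → ℝ → ℝ)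
    (hu1 : ContDiffOn ℝ 2 (fun p : ℝ × ℝ × ℝ => u1 p.1 p.2.1 p.2.2) (Set.univ ×ˢ Ω))
    (hu2 : ContDiffOn ℝ 2 (fun p : ℝ × ℝ × ℝ => u2 p.1 p.2.1 p.2.2) (Set.univ ×ˢ Ω))
    (hD : ContDiffOn ℝ 2 (fun p : ℝ × ℝ × ℝ => D p.1 p.2.1 p.2.2) (Set.univ ×ˢ Ω))
    (hq : ContDiffOn ℝ 2 (fun p : ℝ × ℝ × ℝ => q p.1 p.2.1 p.2.2) (Set.univ ×ˢ Ω))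
    (hmom1 : ∀ t x y, (x, y) ∈ Ω →
      deriv (fun s => u1 s x y) t
        + (q t x y * D t x y) * (-(u2 t x y))
        + deriv (fun a => ((u1 t a y) ^ 2 + (u2 t a y) ^ 2) / 2 + g * D t a y) x = 0)
    (hmom2 : ∀ t x y, (x, y) ∈ Ω →
      deriv (fun s => u2 s x y) t
        + (q t x y * D t x y) * (u1 t x y)
        + deriv (fun b => ((u1 t x b) ^ 2 + (u2 t x b) ^ 2) / 2 + g * D t x b) y = 0)
    (hvort : ∀ t x y, (x, y) ∈ Ω →
      deriv (fun s => q s x y * D s x y) t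
        + deriv (fun a => q t a y * D t a y * u1 t a y) x
        + deriv (fun b => q t x b * D t x b * u2 t x b) y = 0) :
    ∀ t x y, (x, y) ∈ Ω →
      HasDerivAt (fun s => q s x y * D s x y - absVort u1 u2 f s x y) 0 t := by
  intro t x y hxy
  have hSo : IsOpen ((Set.univ : Set ℝ) ×ˢ Ω) := isOpen_univ.prod hΩ
  have cd : ∀ {G : ℝ × ℝ × ℝ → ℝ}, ContDiffOn ℝ 2 G (Set.univ ×ˢ Ω) →
      ∀ {r : ℝ × ℝ × ℝ}, r.2 ∈ Ω → ContDiffAt ℝ 2 G r := by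
    intro G hG r hr
    exact hG.contDiffAt (hSo.mem_nhds (Set.mem_prod.mpr ⟨Set.mem_univ _, hr⟩))
  have dif : ∀ {G : ℝ × ℝ × ℝ → ℝ}, ContDiffOn ℝ 2 G (Set.univ ×ˢ Ω) →
      ∀ {r : ℝ × ℝ × ℝ}, r.2 ∈ Ω → DifferentiableAt ℝ G r := by
    intro G hG r hr; exact (cd hG hr).differentiableAt two_ne_zero
  have dif' : ∀ {G : ℝ × ℝ × ℝ → ℝ}, ContDiffOn ℝ 2 G (Set.univ ×ˢ Ω) →
      ∀ {r : ℝ × ℝ × ℝ}, r.2 ∈ Ω → DifferentiableAt ℝ (fderiv ℝ G) r := by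
    intro G hG r hr; exact ((cd hG hr).fderiv_right (m := 1) (by norm_num)).differentiableAt one_ne_zero
  have hsymm : ∀ {G : ℝ × ℝ × ℝ → ℝ}, ContDiffOn ℝ 2 G (Set.univ ×ˢ Ω) →
      ∀ {r : ℝ × ℝ × ℝ}, r.2 ∈ Ω → ∀ v w,
        fderiv ℝ (fderiv ℝ G) r v w = fderiv ℝ (fderiv ℝ G) r w v := by
    intro G hG r hr v w
    refine second_derivative_symmetric_of_eventually (f := G) ?_ (dif' hG hr).hasFDerivAt v w
    filter_upwards [hSo.mem_nhds (Set.mem_prod.mpr ⟨Set.mem_univ _, hr⟩)] with z hz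
    exact (dif hG hz.2).hasFDerivAt
  have hQD : ContDiffOn ℝ 2
      (fun p : ℝ × ℝ × ℝ => q p.1 p.2.1 p.2.2 * D p.1 p.2.1 p.2.2) (Set.univ ×ˢ Ω) := hq.mul hD
  have hQDU1 : ContDiffOn ℝ 2
      (fun p : ℝ × ℝ × ℝ => q p.1 p.2.1 p.2.2 * D p.1 p.2.1 p.2.2 * u1 p.1 p.2.1 p.2.2)
      (Set.univ ×ˢ Ω) := (hq.mul hD).mul hu1
  have hQDU2 : ContDiffOn ℝ 2
      (fun p : ℝ × ℝ × ℝ => q p.1 p.2.1 p.2.2 * D p.1 p.2.1 p.2.2 * u2 p.1 p.2.1 p.2.2)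
      (Set.univ ×ˢ Ω) := (hq.mul hD).mul hu2
  have hK : ContDiffOn ℝ 2
      (fun p : ℝ × ℝ × ℝ =>
        ((u1 p.1 p.2.1 p.2.2) ^ 2 + (u2 p.1 p.2.1 p.2.2) ^ 2) / 2 + g * D p.1 p.2.1 p.2.2)
      (Set.univ ×ˢ Ω) :=
    (((hu1.pow 2).add (hu2.pow 2)).div_const 2).add (contDiffOn_const.mul hD)
  have hevx : ∀ᶠ a in nhds x, (a, y) ∈ Ω :=
    (Continuous.continuousAt (continuous_id.prodMk continuous_const)).preimage_mem_nhds
      (hΩ.mem_nhds hxy)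
  have hevy : ∀ᶠ b in nhds y, (x, b) ∈ Ω :=
    (Continuous.continuousAt (continuous_const.prodMk continuous_id)).preimage_mem_nhds
      (hΩ.mem_nhds hxy)
  -- basic pieces
  have h1 : HasDerivAt (fun s => q s x y * D s x y)
      (fderiv ℝ (fun p : ℝ × ℝ × ℝ => q p.1 p.2.1 p.2.2 * D p.1 p.2.1 p.2.2) (t, x, y) (1, 0, 0)) t :=
    slice_t (dif hQD hxy)
  have e2 : (fun s : ℝ => deriv (fun a => u2 s a y) x)
      = fun s => fderiv ℝ (fun p : ℝ × ℝ × ℝ => u2 p.1 p.2.1 p.2.2) (s, x, y) (0, 1, 0) :=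
    funext fun s => (slice_x (dif hu2 hxy)).deriv
  have h2 : HasDerivAt (fun s : ℝ => deriv (fun a => u2 s a y) x)
      (fderiv ℝ (fderiv ℝ (fun p : ℝ × ℝ × ℝ => u2 p.1 p.2.1 p.2.2)) (t, x, y) (1, 0, 0) (0, 1, 0)) t := by
    rw [e2]
    exact second_slice (curve_t t x y) (dif' hu2 hxy) _
  have e3 : (fun s : ℝ => deriv (fun b => u1 s x b) y)
      = fun s => fderiv ℝ (fun p : ℝ × ℝ × ℝ => u1 p.1 p.2.1 p.2.2) (s, x, y) (0, 0, 1) :=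
    funext fun s => (slice_y (dif hu1 hxy)).deriv
  have h3 : HasDerivAt (fun s : ℝ => deriv (fun b => u1 s x b) y)
      (fderiv ℝ (fderiv ℝ (fun p : ℝ × ℝ × ℝ => u1 p.1 p.2.1 p.2.2)) (t, x, y) (1, 0, 0) (0, 0, 1)) t := by
    rw [e3]
    exact second_slice (curve_t t x y) (dif' hu1 hxy) _
  have hc : HasDerivAt (fun _ : ℝ => f x y) 0 t := hasDerivAt_const t _
  have total := h1.sub ((h2.sub h3).add hc)
  simp only [absVort]
  refine total.congr_deriv ?_
  -- now prove 0 = value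
  -- u2 side
  have symm2 := hsymm hu2 (r := (t, x, y)) hxy (1, 0, 0) (0, 1, 0)
  have A2 : HasDerivAt (fun a => fderiv ℝ (fun p : ℝ × ℝ × ℝ => u2 p.1 p.2.1 p.2.2) (t, a, y) (1, 0, 0))
      (fderiv ℝ (fderiv ℝ (fun p : ℝ × ℝ × ℝ => u2 p.1 p.2.1 p.2.2)) (t, x, y) (0, 1, 0) (1, 0, 0)) x :=
    second_slice (curve_x t x y) (dif' hu2 hxy) _
  have B2 : HasDerivAt
      (fun a => -(q t a y * D t a y * u1 t a y)
        - fderiv ℝ (fun p : ℝ × ℝ × ℝ =>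
            ((u1 p.1 p.2.1 p.2.2) ^ 2 + (u2 p.1 p.2.1 p.2.2) ^ 2) / 2 + g * D p.1 p.2.1 p.2.2)
            (t, a, y) (0, 0, 1))
      (-(fderiv ℝ (fun p : ℝ × ℝ × ℝ => q p.1 p.2.1 p.2.2 * D p.1 p.2.1 p.2.2 * u1 p.1 p.2.1 p.2.2)
            (t, x, y) (0, 1, 0))
        - fderiv ℝ (fderiv ℝ (fun p : ℝ × ℝ × ℝ =>
            ((u1 p.1 p.2.1 p.2.2) ^ 2 + (u2 p.1 p.2.1 p.2.2) ^ 2) / 2 + g * D p.1 p.2.1 p.2.2))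
            (t, x, y) (0, 1, 0) (0, 0, 1)) x :=
    ((slice_x (dif hQDU1 hxy)).neg).sub (second_slice (curve_x t x y) (dif' hK hxy) _)
  have ev2 : (fun a => fderiv ℝ (fun p : ℝ × ℝ × ℝ => u2 p.1 p.2.1 p.2.2) (t, a, y) (1, 0, 0))
      =ᶠ[nhds x] fun a => -(q t a y * D t a y * u1 t a y)
        - fderiv ℝ (fun p : ℝ × ℝ × ℝ =>
            ((u1 p.1 p.2.1 p.2.2) ^ 2 + (u2 p.1 p.2.1 p.2.2) ^ 2) / 2 + g * D p.1 p.2.1 p.2.2)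
            (t, a, y) (0, 0, 1) := by
    filter_upwards [hevx] with a ha
    have hm := hmom2 t a y ha
    have d1 : deriv (fun s => u2 s a y) t
        = fderiv ℝ (fun p : ℝ × ℝ × ℝ => u2 p.1 p.2.1 p.2.2) (t, a, y) (1, 0, 0) :=
      (slice_t (dif hu2 ha)).deriv
    have d2 : deriv (fun b => ((u1 t a b) ^ 2 + (u2 t a b) ^ 2) / 2 + g * D t a b) y
        = fderiv ℝ (fun p : ℝ × ℝ × ℝ =>
            ((u1 p.1 p.2.1 p.2.2) ^ 2 + (u2 p.1 p.2.1 p.2.2) ^ 2) / 2 + g * D p.1 p.2.1 p.2.2)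
            (t, a, y) (0, 0, 1) :=
      (slice_y (dif hK ha)).deriv
    rw [d1, d2] at hm
    linarith
  have eq2 := A2.unique (B2.congr_of_eventuallyEq ev2)
  -- u1 side
  have symm1 := hsymm hu1 (r := (t, x, y)) hxy (1, 0, 0) (0, 0, 1)
  have A1 : HasDerivAt (fun b => fderiv ℝ (fun p : ℝ × ℝ × ℝ => u1 p.1 p.2.1 p.2.2) (t, x, b) (1, 0, 0))
      (fderiv ℝ (fderiv ℝ (fun p : ℝ × ℝ × ℝ => u1 p.1 p.2.1 p.2.2)) (t, x, y) (0, 0, 1) (1, 0, 0)) y :=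
    second_slice (curve_y t x y) (dif' hu1 hxy) _
  have B1 : HasDerivAt
      (fun b => q t x b * D t x b * u2 t x b
        - fderiv ℝ (fun p : ℝ × ℝ × ℝ =>
            ((u1 p.1 p.2.1 p.2.2) ^ 2 + (u2 p.1 p.2.1 p.2.2) ^ 2) / 2 + g * D p.1 p.2.1 p.2.2)
            (t, x, b) (0, 1, 0))
      (fderiv ℝ (fun p : ℝ × ℝ × ℝ => q p.1 p.2.1 p.2.2 * D p.1 p.2.1 p.2.2 * u2 p.1 p.2.1 p.2.2)
            (t, x, y) (0, 0, 1)
        - fderiv ℝ (fderiv ℝ (fun p : ℝ × ℝ × ℝ =>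
            ((u1 p.1 p.2.1 p.2.2) ^ 2 + (u2 p.1 p.2.1 p.2.2) ^ 2) / 2 + g * D p.1 p.2.1 p.2.2))
            (t, x, y) (0, 0, 1) (0, 1, 0)) y :=
    (slice_y (dif hQDU2 hxy)).sub (second_slice (curve_y t x y) (dif' hK hxy) _)
  have ev1 : (fun b => fderiv ℝ (fun p : ℝ × ℝ × ℝ => u1 p.1 p.2.1 p.2.2) (t, x, b) (1, 0, 0))
      =ᶠ[nhds y] fun b => q t x b * D t x b * u2 t x b
        - fderiv ℝ (fun p : ℝ × ℝ × ℝ =>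
            ((u1 p.1 p.2.1 p.2.2) ^ 2 + (u2 p.1 p.2.1 p.2.2) ^ 2) / 2 + g * D p.1 p.2.1 p.2.2)
            (t, x, b) (0, 1, 0) := by
    filter_upwards [hevy] with b hb
    have hm := hmom1 t x b hb
    have d1 : deriv (fun s => u1 s x b) t
        = fderiv ℝ (fun p : ℝ × ℝ × ℝ => u1 p.1 p.2.1 p.2.2) (t, x, b) (1, 0, 0) :=
      (slice_t (dif hu1 hb)).deriv
    have d2 : deriv (fun a => ((u1 t a b) ^ 2 + (u2 t a b) ^ 2) / 2 + g * D t a b) x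
        = fderiv ℝ (fun p : ℝ × ℝ × ℝ =>
            ((u1 p.1 p.2.1 p.2.2) ^ 2 + (u2 p.1 p.2.1 p.2.2) ^ 2) / 2 + g * D p.1 p.2.1 p.2.2)
            (t, x, b) (0, 1, 0) :=
      (slice_x (dif hK hb)).deriv
    rw [d1, d2] at hm
    linarith
  have eq1 := A1.unique (B1.congr_of_eventuallyEq ev1)
  have symmK := hsymm hK (r := (t, x, y)) hxy (0, 1, 0) (0, 0, 1)
  -- vorticity equation in fderiv form
  have hv := hvort t x y hxy
  rw [(slice_t (dif hQD hxy)).deriv, (slice_x (dif hQDU1 hxy)).deriv,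
    (slice_y (dif hQDU2 hxy)).deriv] at hv
  rw [symm2, eq2, symm1, eq1]
  linarith

/-- If on `ℝ × Ω` (with `Ω ⊆ ℝ²` open) both the momentum equation
`∂ₜu + (qD) u⊥ + ∇(½|u|² + g D) = 0` and the vorticity evolution equation
`∂ₜ(qD) + ∇·(qD u) = 0` hold pointwise, for `u, D, q` twice continuously differentiable
and `f` continuously differentiable, then `∂ₜ(qD − ∇⊥·u − f) = 0` on `ℝ × Ω`;
in particular if the diagnostic relation `qD = ∇⊥·u + f` holds at time `t = 0` then
it holds at all times. -/
theorem diagnostic_relation_preserved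
    (Ω : Set (ℝ × ℝ)) (hΩ : IsOpen Ω) (g : ℝ)
    (u1 u2 D q : ℝ → ℝ → ℝ → ℝ) (f : ℝ → ℝ → ℝ)
    (hu1 : ContDiffOn ℝ 2 (fun p : ℝ × ℝ × ℝ => u1 p.1 p.2.1 p.2.2) (Set.univ ×ˢ Ω))
    (hu2 : ContDiffOn ℝ 2 (fun p : ℝ × ℝ × ℝ => u2 p.1 p.2.1 p.2.2) (Set.univ ×ˢ Ω))
    (hD : ContDiffOn ℝ 2 (fun p : ℝ × ℝ × ℝ => D p.1 p.2.1 p.2.2) (Set.univ ×ˢ Ω))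
    (hq : ContDiffOn ℝ 2 (fun p : ℝ × ℝ × ℝ => q p.1 p.2.1 p.2.2) (Set.univ ×ˢ Ω))
    (hf : ContDiffOn ℝ 1 (fun p : ℝ × ℝ => f p.1 p.2) Ω)
    (hmom1 : ∀ t x y, (x, y) ∈ Ω →
      deriv (fun s => u1 s x y) t
        + (q t x y * D t x y) * (-(u2 t x y))
        + deriv (fun a => ((u1 t a y) ^ 2 + (u2 t a y) ^ 2) / 2 + g * D t a y) x = 0)
    (hmom2 : ∀ t x y, (x, y) ∈ Ω →
      deriv (fun s => u2 s x y) t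
        + (q t x y * D t x y) * (u1 t x y)
        + deriv (fun b => ((u1 t x b) ^ 2 + (u2 t x b) ^ 2) / 2 + g * D t x b) y = 0)
    (hvort : ∀ t x y, (x, y) ∈ Ω →
      deriv (fun s => q s x y * D s x y) t
        + deriv (fun a => q t a y * D t a y * u1 t a y) x
        + deriv (fun b => q t x b * D t x b * u2 t x b) y = 0) :
    (∀ t x y, (x, y) ∈ Ω →
      deriv (fun s => q s x y * D s x y - absVort u1 u2 f s x y) t = 0) ∧
    ((∀ x y, (x, y) ∈ Ω → q 0 x y * D 0 x y = absVort u1 u2 f 0 x y) →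
      ∀ t x y, (x, y) ∈ Ω → q t x y * D t x y = absVort u1 u2 f t x y) := by
  have key := diag_key Ω hΩ g u1 u2 D q f hu1 hu2 hD hq hmom1 hmom2 hvort
  constructor
  · intro t x y hxy
    exact (key t x y hxy).deriv
  · intro h0 t x y hxy
    have hdiff : Differentiable ℝ (fun s => q s x y * D s x y - absVort u1 u2 f s x y) :=
      fun s => (key s x y hxy).differentiableAt
    have hder : ∀ s, deriv (fun s => q s x y * D s x y - absVort u1 u2 f s x y) s = 0 :=
      fun s => (key s x y hxy).deriv
    have hconst := is_const_of_deriv_eq_zero hdiff hder t 0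
    have h0' := h0 x y hxy
    have : q t x y * D t x y - absVort u1 u2 f t x y = 0 := by
      rw [hconst]; linarith
    linarith
end

section
/- Let Q = [0,1]² ⊆ ℝ², g ∈ ℝ, and let u : ℝ × Q → ℝ², D : ℝ × Q → ℝ be twice continuously differentiable, and let α : ℝ × Q → ℝ be any continuous scalar field. Suppose that on ℝ × Q: (i) ∂ₜu + α u⊥ + ∇(½|u|² + g D) = 0; (ii) ∂ₜD + ∇·(D u) = 0; and (iii) the slip boundary condition holds: u₁(t,0,y) = u₁(t,1,y) = 0 for all y ∈ [0,1] and u₂(t,x,0) = u₂(t,x,1) = 0 for all x ∈ [0,1], for every t. Then E(t) := ∫_Q ( ½ D |u|² + ½ g D² ) dx dy is constant in t. -/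
open MeasureTheory


def SQ : Set (ℝ × ℝ × ℝ) := Set.univ ×ˢ (Set.Icc (0:ℝ) 1 ×ˢ Set.Icc (0:ℝ) 1)

lemma sq_uniqueDiff : UniqueDiffOn ℝ SQ :=
  uniqueDiffOn_univ.prod ((uniqueDiffOn_Icc one_pos).prod (uniqueDiffOn_Icc one_pos))

lemma mem_SQ {t x y : ℝ} (hx : x ∈ Set.Icc (0:ℝ) 1) (hy : y ∈ Set.Icc (0:ℝ) 1) :
    (t,x,y) ∈ SQ := ⟨trivial, hx, hy⟩

section partials
variable {E : Type*} [NormedAddCommGroup E] [NormedSpace ℝ E]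
variable {F : ℝ × ℝ × ℝ → E} {t x y : ℝ}

lemma pd1 (hx : x ∈ Set.Icc (0:ℝ) 1) (hy : y ∈ Set.Icc (0:ℝ) 1)
    (h : DifferentiableWithinAt ℝ F SQ (t,x,y)) :
    HasDerivAt (fun s => F (s,x,y)) (fderivWithin ℝ F SQ (t,x,y) (1,0,0)) t := by
  have hline : HasFDerivAt (fun s : ℝ => ((s,x,y) : ℝ×ℝ×ℝ))
      ((ContinuousLinearMap.id ℝ ℝ).prod 0) t :=
    HasFDerivAt.prodMk (hasFDerivAt_id t) (hasFDerivAt_const (x,y) t)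
  have h2 := (h.hasFDerivWithinAt.comp t (hline.hasFDerivWithinAt (s := Set.univ))
      (fun s _ => mem_SQ hx hy))
  have h3 := (hasFDerivWithinAt_univ.mp h2).hasDerivAt
  exact h3

lemma pd2 (hx : x ∈ Set.Icc (0:ℝ) 1) (hy : y ∈ Set.Icc (0:ℝ) 1)
    (h : DifferentiableWithinAt ℝ F SQ (t,x,y)) :
    HasDerivWithinAt (fun a => F (t,a,y)) (fderivWithin ℝ F SQ (t,x,y) (0,1,0))
      (Set.Icc 0 1) x := by
  have hline : HasFDerivAt (fun a : ℝ => ((t,a,y) : ℝ×ℝ×ℝ))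
      ((0 : ℝ →L[ℝ] ℝ).prod ((ContinuousLinearMap.id ℝ ℝ).prod 0)) x :=
    HasFDerivAt.prodMk (hasFDerivAt_const t x) (HasFDerivAt.prodMk (hasFDerivAt_id x) (hasFDerivAt_const y x))
  have h2 := h.hasFDerivWithinAt.comp x (hline.hasFDerivWithinAt (s := Set.Icc 0 1))
      (fun a ha => mem_SQ ha hy)
  simpa [Function.comp_def] using h2.hasDerivWithinAt

lemma pd3 (hx : x ∈ Set.Icc (0:ℝ) 1) (hy : y ∈ Set.Icc (0:ℝ) 1)
    (h : DifferentiableWithinAt ℝ F SQ (t,x,y)) :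
    HasDerivWithinAt (fun b => F (t,x,b)) (fderivWithin ℝ F SQ (t,x,y) (0,0,1))
      (Set.Icc 0 1) y := by
  have hline : HasFDerivAt (fun b : ℝ => ((t,x,b) : ℝ×ℝ×ℝ))
      ((0 : ℝ →L[ℝ] ℝ).prod ((0 : ℝ →L[ℝ] ℝ).prod (ContinuousLinearMap.id ℝ ℝ))) y :=
    HasFDerivAt.prodMk (hasFDerivAt_const t y) (HasFDerivAt.prodMk (hasFDerivAt_const x y) (hasFDerivAt_id y))
  have h2 := h.hasFDerivWithinAt.comp y (hline.hasFDerivWithinAt (s := Set.Icc 0 1))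
      (fun b hb => mem_SQ hx hb)
  simpa [Function.comp_def] using h2.hasDerivWithinAt

lemma pd2' (hx : x ∈ Set.Ioo (0:ℝ) 1) (hy : y ∈ Set.Icc (0:ℝ) 1)
    (h : DifferentiableWithinAt ℝ F SQ (t,x,y)) :
    HasDerivAt (fun a => F (t,a,y)) (fderivWithin ℝ F SQ (t,x,y) (0,1,0)) x :=
  (pd2 (Set.Ioo_subset_Icc_self hx) hy h).hasDerivAt (Icc_mem_nhds hx.1 hx.2)

lemma pd3' (hx : x ∈ Set.Icc (0:ℝ) 1) (hy : y ∈ Set.Ioo (0:ℝ) 1)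
    (h : DifferentiableWithinAt ℝ F SQ (t,x,y)) :
    HasDerivAt (fun b => F (t,x,b)) (fderivWithin ℝ F SQ (t,x,y) (0,0,1)) y :=
  (pd3 hx (Set.Ioo_subset_Icc_self hy) h).hasDerivAt (Icc_mem_nhds hy.1 hy.2)

lemma contPartial (hF : ContDiffOn ℝ 2 F SQ) (v : ℝ×ℝ×ℝ) :
    ContinuousOn (fun p => fderivWithin ℝ F SQ p v) SQ :=
  (hF.continuousOn_fderivWithin sq_uniqueDiff (by norm_num)).clm_apply continuousOn_const

end partials


/-- On the unit square `Q = [0,1]²`, if the modified momentum equation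
`∂ₜu + α u⊥ + ∇(½|u|² + g D) = 0` with an arbitrary continuous coefficient field `α`,
the continuity equation `∂ₜD + ∇·(D u) = 0`, and the slip boundary condition
(vanishing of the normal component of `u` on `∂Q`) hold, for `u, D` twice continuously
differentiable, then the energy `E(t) = ∫_Q ½ D |u|² + ½ g D² dx dy` is constant. -/
theorem energy_conserved_modified_pv
    (g : ℝ) (u1 u2 D α : ℝ → ℝ → ℝ → ℝ)
    (hu1 : ContDiffOn ℝ 2 (fun p : ℝ × ℝ × ℝ => u1 p.1 p.2.1 p.2.2)
      (Set.univ ×ˢ (Set.Icc (0:ℝ) 1 ×ˢ Set.Icc (0:ℝ) 1)))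
    (hu2 : ContDiffOn ℝ 2 (fun p : ℝ × ℝ × ℝ => u2 p.1 p.2.1 p.2.2)
      (Set.univ ×ˢ (Set.Icc (0:ℝ) 1 ×ˢ Set.Icc (0:ℝ) 1)))
    (hD : ContDiffOn ℝ 2 (fun p : ℝ × ℝ × ℝ => D p.1 p.2.1 p.2.2)
      (Set.univ ×ˢ (Set.Icc (0:ℝ) 1 ×ˢ Set.Icc (0:ℝ) 1)))
    (hα : ContinuousOn (fun p : ℝ × ℝ × ℝ => α p.1 p.2.1 p.2.2)
      (Set.univ ×ˢ (Set.Icc (0:ℝ) 1 ×ˢ Set.Icc (0:ℝ) 1)))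
    (hmom1 : ∀ t x y, (x, y) ∈ Set.Icc (0:ℝ) 1 ×ˢ Set.Icc (0:ℝ) 1 →
      deriv (fun s => u1 s x y) t
        + α t x y * (-(u2 t x y))
        + deriv (fun a => ((u1 t a y) ^ 2 + (u2 t a y) ^ 2) / 2 + g * D t a y) x = 0)
    (hmom2 : ∀ t x y, (x, y) ∈ Set.Icc (0:ℝ) 1 ×ˢ Set.Icc (0:ℝ) 1 →
      deriv (fun s => u2 s x y) t
        + α t x y * (u1 t x y)
        + deriv (fun b => ((u1 t x b) ^ 2 + (u2 t x b) ^ 2) / 2 + g * D t x b) y = 0)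
    (hcont : ∀ t x y, (x, y) ∈ Set.Icc (0:ℝ) 1 ×ˢ Set.Icc (0:ℝ) 1 →
      deriv (fun s => D s x y) t
        + deriv (fun a => D t a y * u1 t a y) x
        + deriv (fun b => D t x b * u2 t x b) y = 0)
    (hbc1 : ∀ t y, y ∈ Set.Icc (0:ℝ) 1 → u1 t 0 y = 0 ∧ u1 t 1 y = 0)
    (hbc2 : ∀ t x, x ∈ Set.Icc (0:ℝ) 1 → u2 t x 0 = 0 ∧ u2 t x 1 = 0) :
    ∀ t₁ t₂ : ℝ,
      (∫ p in Set.Icc (0:ℝ) 1 ×ˢ Set.Icc (0:ℝ) 1,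
        (D t₁ p.1 p.2 * ((u1 t₁ p.1 p.2) ^ 2 + (u2 t₁ p.1 p.2) ^ 2) / 2
          + g * (D t₁ p.1 p.2) ^ 2 / 2))
      = ∫ p in Set.Icc (0:ℝ) 1 ×ˢ Set.Icc (0:ℝ) 1,
        (D t₂ p.1 p.2 * ((u1 t₂ p.1 p.2) ^ 2 + (u2 t₂ p.1 p.2) ^ 2) / 2
          + g * (D t₂ p.1 p.2) ^ 2 / 2) := by
  intro t₁ t₂
  clear hα
  have hQm : MeasurableSet (Set.Icc (0:ℝ) 1 ×ˢ Set.Icc (0:ℝ) 1) :=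
    measurableSet_Icc.prod measurableSet_Icc
  have hQc : IsCompact (Set.Icc (0:ℝ) 1 ×ˢ Set.Icc (0:ℝ) 1) :=
    isCompact_Icc.prod isCompact_Icc
  set V1 : ℝ×ℝ×ℝ → ℝ := fun p => u1 p.1 p.2.1 p.2.2 with hV1
  set V2 : ℝ×ℝ×ℝ → ℝ := fun p => u2 p.1 p.2.1 p.2.2 with hV2
  set V3 : ℝ×ℝ×ℝ → ℝ := fun p => D p.1 p.2.1 p.2.2 with hV3
  set a1t : ℝ×ℝ×ℝ → ℝ := fun p => fderivWithin ℝ V1 SQ p (1,0,0) with ha1t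
  set a1x : ℝ×ℝ×ℝ → ℝ := fun p => fderivWithin ℝ V1 SQ p (0,1,0) with ha1x
  set a1y : ℝ×ℝ×ℝ → ℝ := fun p => fderivWithin ℝ V1 SQ p (0,0,1) with ha1y
  set a2t : ℝ×ℝ×ℝ → ℝ := fun p => fderivWithin ℝ V2 SQ p (1,0,0) with ha2t
  set a2x : ℝ×ℝ×ℝ → ℝ := fun p => fderivWithin ℝ V2 SQ p (0,1,0) with ha2x
  set a2y : ℝ×ℝ×ℝ → ℝ := fun p => fderivWithin ℝ V2 SQ p (0,0,1) with ha2y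
  set a3t : ℝ×ℝ×ℝ → ℝ := fun p => fderivWithin ℝ V3 SQ p (1,0,0) with ha3t
  set a3x : ℝ×ℝ×ℝ → ℝ := fun p => fderivWithin ℝ V3 SQ p (0,1,0) with ha3x
  set a3y : ℝ×ℝ×ℝ → ℝ := fun p => fderivWithin ℝ V3 SQ p (0,0,1) with ha3y
  have hd1 : ∀ {t x y : ℝ}, x ∈ Set.Icc (0:ℝ) 1 → y ∈ Set.Icc (0:ℝ) 1 →
      DifferentiableWithinAt ℝ V1 SQ (t,x,y) :=
    fun hx hy => (hu1.differentiableOn two_ne_zero) _ (mem_SQ hx hy)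
  have hd2 : ∀ {t x y : ℝ}, x ∈ Set.Icc (0:ℝ) 1 → y ∈ Set.Icc (0:ℝ) 1 →
      DifferentiableWithinAt ℝ V2 SQ (t,x,y) :=
    fun hx hy => (hu2.differentiableOn two_ne_zero) _ (mem_SQ hx hy)
  have hd3 : ∀ {t x y : ℝ}, x ∈ Set.Icc (0:ℝ) 1 → y ∈ Set.Icc (0:ℝ) 1 →
      DifferentiableWithinAt ℝ V3 SQ (t,x,y) :=
    fun hx hy => (hD.differentiableOn two_ne_zero) _ (mem_SQ hx hy)
  -- time partial derivatives
  have pt1 : ∀ {t x y : ℝ}, x ∈ Set.Icc (0:ℝ) 1 → y ∈ Set.Icc (0:ℝ) 1 →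
      HasDerivAt (fun s => u1 s x y) (a1t (t,x,y)) t :=
    fun hx hy => pd1 hx hy (hd1 hx hy)
  have pt2 : ∀ {t x y : ℝ}, x ∈ Set.Icc (0:ℝ) 1 → y ∈ Set.Icc (0:ℝ) 1 →
      HasDerivAt (fun s => u2 s x y) (a2t (t,x,y)) t :=
    fun hx hy => pd1 hx hy (hd2 hx hy)
  have pt3 : ∀ {t x y : ℝ}, x ∈ Set.Icc (0:ℝ) 1 → y ∈ Set.Icc (0:ℝ) 1 →
      HasDerivAt (fun s => D s x y) (a3t (t,x,y)) t :=
    fun hx hy => pd1 hx hy (hd3 hx hy)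
  -- x partial derivatives, within
  have pxw1 : ∀ {t x y : ℝ}, x ∈ Set.Icc (0:ℝ) 1 → y ∈ Set.Icc (0:ℝ) 1 →
      HasDerivWithinAt (fun a => u1 t a y) (a1x (t,x,y)) (Set.Icc 0 1) x :=
    fun hx hy => pd2 hx hy (hd1 hx hy)
  have pxw2 : ∀ {t x y : ℝ}, x ∈ Set.Icc (0:ℝ) 1 → y ∈ Set.Icc (0:ℝ) 1 →
      HasDerivWithinAt (fun a => u2 t a y) (a2x (t,x,y)) (Set.Icc 0 1) x :=
    fun hx hy => pd2 hx hy (hd2 hx hy)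
  have pxw3 : ∀ {t x y : ℝ}, x ∈ Set.Icc (0:ℝ) 1 → y ∈ Set.Icc (0:ℝ) 1 →
      HasDerivWithinAt (fun a => D t a y) (a3x (t,x,y)) (Set.Icc 0 1) x :=
    fun hx hy => pd2 hx hy (hd3 hx hy)
  -- y partial derivatives, within
  have pyw1 : ∀ {t x y : ℝ}, x ∈ Set.Icc (0:ℝ) 1 → y ∈ Set.Icc (0:ℝ) 1 →
      HasDerivWithinAt (fun b => u1 t x b) (a1y (t,x,y)) (Set.Icc 0 1) y :=
    fun hx hy => pd3 hx hy (hd1 hx hy)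
  have pyw2 : ∀ {t x y : ℝ}, x ∈ Set.Icc (0:ℝ) 1 → y ∈ Set.Icc (0:ℝ) 1 →
      HasDerivWithinAt (fun b => u2 t x b) (a2y (t,x,y)) (Set.Icc 0 1) y :=
    fun hx hy => pd3 hx hy (hd2 hx hy)
  have pyw3 : ∀ {t x y : ℝ}, x ∈ Set.Icc (0:ℝ) 1 → y ∈ Set.Icc (0:ℝ) 1 →
      HasDerivWithinAt (fun b => D t x b) (a3y (t,x,y)) (Set.Icc 0 1) y :=
    fun hx hy => pd3 hx hy (hd3 hx hy)
  -- interior versions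
  have px1 : ∀ {t x y : ℝ}, x ∈ Set.Ioo (0:ℝ) 1 → y ∈ Set.Icc (0:ℝ) 1 →
      HasDerivAt (fun a => u1 t a y) (a1x (t,x,y)) x :=
    fun hx hy => pd2' hx hy (hd1 (Set.Ioo_subset_Icc_self hx) hy)
  have px2 : ∀ {t x y : ℝ}, x ∈ Set.Ioo (0:ℝ) 1 → y ∈ Set.Icc (0:ℝ) 1 →
      HasDerivAt (fun a => u2 t a y) (a2x (t,x,y)) x :=
    fun hx hy => pd2' hx hy (hd2 (Set.Ioo_subset_Icc_self hx) hy)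
  have px3 : ∀ {t x y : ℝ}, x ∈ Set.Ioo (0:ℝ) 1 → y ∈ Set.Icc (0:ℝ) 1 →
      HasDerivAt (fun a => D t a y) (a3x (t,x,y)) x :=
    fun hx hy => pd2' hx hy (hd3 (Set.Ioo_subset_Icc_self hx) hy)
  have py1 : ∀ {t x y : ℝ}, x ∈ Set.Icc (0:ℝ) 1 → y ∈ Set.Ioo (0:ℝ) 1 →
      HasDerivAt (fun b => u1 t x b) (a1y (t,x,y)) y :=
    fun hx hy => pd3' hx hy (hd1 hx (Set.Ioo_subset_Icc_self hy))
  have py2 : ∀ {t x y : ℝ}, x ∈ Set.Icc (0:ℝ) 1 → y ∈ Set.Ioo (0:ℝ) 1 →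
      HasDerivAt (fun b => u2 t x b) (a2y (t,x,y)) y :=
    fun hx hy => pd3' hx hy (hd2 hx (Set.Ioo_subset_Icc_self hy))
  have py3 : ∀ {t x y : ℝ}, x ∈ Set.Icc (0:ℝ) 1 → y ∈ Set.Ioo (0:ℝ) 1 →
      HasDerivAt (fun b => D t x b) (a3y (t,x,y)) y :=
    fun hx hy => pd3' hx hy (hd3 hx (Set.Ioo_subset_Icc_self hy))
  -- continuity of fields and partials
  have hcV1 : ContinuousOn V1 SQ := hu1.continuousOn
  have hcV2 : ContinuousOn V2 SQ := hu2.continuousOn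
  have hcV3 : ContinuousOn V3 SQ := hD.continuousOn
  have hca1t : ContinuousOn a1t SQ := contPartial hu1 _
  have hca1x : ContinuousOn a1x SQ := contPartial hu1 _
  have hca1y : ContinuousOn a1y SQ := contPartial hu1 _
  have hca2t : ContinuousOn a2t SQ := contPartial hu2 _
  have hca2x : ContinuousOn a2x SQ := contPartial hu2 _
  have hca2y : ContinuousOn a2y SQ := contPartial hu2 _
  have hca3t : ContinuousOn a3t SQ := contPartial hD _
  have hca3x : ContinuousOn a3x SQ := contPartial hD _
  have hca3y : ContinuousOn a3y SQ := contPartial hD _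
  -- the time derivative of the energy density
  set ET : ℝ×ℝ×ℝ → ℝ := fun p =>
    a3t p * ((V1 p ^ 2 + V2 p ^ 2) / 2 + g * V3 p)
      + V3 p * (V1 p * a1t p + V2 p * a2t p) with hET
  have hcET : ContinuousOn ET SQ := by
    rw [hET]
    exact (hca3t.mul ((((hcV1.pow 2).add (hcV2.pow 2)).div_const 2).add
        (continuousOn_const.mul hcV3))).add
      (hcV3.mul ((hcV1.mul hca1t).add (hcV2.mul hca2t)))
  have hderE : ∀ (t : ℝ) (p : ℝ×ℝ), p ∈ Set.Icc (0:ℝ) 1 ×ˢ Set.Icc (0:ℝ) 1 →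
      HasDerivAt (fun s => D s p.1 p.2 * ((u1 s p.1 p.2) ^ 2 + (u2 s p.1 p.2) ^ 2) / 2
        + g * (D s p.1 p.2) ^ 2 / 2) (ET (t,p.1,p.2)) t := by
    rintro t ⟨x,y⟩ ⟨hx,hy⟩
    have hA := pt1 (t := t) hx hy
    have hB := pt2 (t := t) hx hy
    have hC := pt3 (t := t) hx hy
    have h := ((hC.mul ((hA.pow 2).add (hB.pow 2))).div_const 2).add
      (((hC.pow 2).const_mul g).div_const 2)
    refine h.congr_deriv ?_
    simp only [hET, Pi.add_apply, Pi.mul_apply, Pi.pow_apply]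
    push_cast
    ring
  -- slice continuity helpers
  have hembp : ∀ (t : ℝ) {G : ℝ×ℝ×ℝ → ℝ}, ContinuousOn G SQ →
      ContinuousOn (fun p : ℝ×ℝ => G (t,p.1,p.2)) (Set.Icc (0:ℝ) 1 ×ˢ Set.Icc (0:ℝ) 1) :=
    fun t G hG => hG.comp
      ((continuous_const.prodMk (continuous_fst.prodMk continuous_snd)).continuousOn)
      (fun p hp => mem_SQ hp.1 hp.2)
  have hslx : ∀ (t y : ℝ), y ∈ Set.Icc (0:ℝ) 1 → ∀ {G : ℝ×ℝ×ℝ → ℝ}, ContinuousOn G SQ →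
      ContinuousOn (fun x => G (t,x,y)) (Set.Icc (0:ℝ) 1) :=
    fun t y hy G hG => hG.comp
      ((continuous_const.prodMk (continuous_id.prodMk continuous_const)).continuousOn)
      (fun x hx => mem_SQ hx hy)
  have hsly : ∀ (t x : ℝ), x ∈ Set.Icc (0:ℝ) 1 → ∀ {G : ℝ×ℝ×ℝ → ℝ}, ContinuousOn G SQ →
      ContinuousOn (fun y => G (t,x,y)) (Set.Icc (0:ℝ) 1) :=
    fun t x hx G hG => hG.comp
      ((continuous_const.prodMk (continuous_const.prodMk continuous_id)).continuousOn)
      (fun y hy => mem_SQ hx hy)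
  have hconte : ∀ t : ℝ, ContinuousOn (fun p : ℝ×ℝ =>
      D t p.1 p.2 * ((u1 t p.1 p.2) ^ 2 + (u2 t p.1 p.2) ^ 2) / 2
        + g * (D t p.1 p.2) ^ 2 / 2) (Set.Icc (0:ℝ) 1 ×ˢ Set.Icc (0:ℝ) 1) := by
    intro t
    have h1 := hembp t hcV1
    have h2 := hembp t hcV2
    have h3 := hembp t hcV3
    exact ((h3.mul ((h1.pow 2).add (h2.pow 2))).div_const 2).add
      ((continuousOn_const.mul (h3.pow 2)).div_const 2)
  -- derivative of energy
  have hE : ∀ t₀ : ℝ, HasDerivAt (fun t => ∫ p in Set.Icc (0:ℝ) 1 ×ˢ Set.Icc (0:ℝ) 1,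
      (D t p.1 p.2 * ((u1 t p.1 p.2) ^ 2 + (u2 t p.1 p.2) ^ 2) / 2
        + g * (D t p.1 p.2) ^ 2 / 2))
      (∫ p in Set.Icc (0:ℝ) 1 ×ˢ Set.Icc (0:ℝ) 1, ET (t₀,p.1,p.2)) t₀ := by
    intro t₀
    have hKc : IsCompact (Set.Icc (t₀-1) (t₀+1) ×ˢ (Set.Icc (0:ℝ) 1 ×ˢ Set.Icc (0:ℝ) 1)) :=
      isCompact_Icc.prod hQc
    obtain ⟨C, hC⟩ := hKc.exists_bound_of_continuousOn
      (hcET.mono (fun p hp => ⟨trivial, hp.2⟩))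
    refine (hasDerivAt_integral_of_dominated_loc_of_deriv_le (𝕜 := ℝ)
      (μ := volume.restrict (Set.Icc (0:ℝ) 1 ×ˢ Set.Icc (0:ℝ) 1))
      (F := fun t (p : ℝ×ℝ) => D t p.1 p.2 * ((u1 t p.1 p.2) ^ 2 + (u2 t p.1 p.2) ^ 2) / 2
        + g * (D t p.1 p.2) ^ 2 / 2)
      (F' := fun t (p : ℝ×ℝ) => ET (t,p.1,p.2)) (x₀ := t₀) (s := Metric.ball t₀ 1)
      (bound := fun _ => C) (Metric.ball_mem_nhds t₀ one_pos) ?_ ?_ ?_ ?_ ?_ ?_).2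
    · exact Filter.Eventually.of_forall fun t => (hconte t).aestronglyMeasurable hQm
    · exact ContinuousOn.integrableOn_compact hQc (hconte t₀)
    · exact (hembp t₀ hcET).aestronglyMeasurable hQm
    · refine (ae_restrict_iff' hQm).2 (Filter.Eventually.of_forall fun p hp => ?_)
      intro t ht
      have h' := abs_lt.mp (by simpa [Real.dist_eq] using Metric.mem_ball.mp ht)
      exact hC (t,p.1,p.2) ⟨⟨by linarith [h'.1], by linarith [h'.2]⟩, hp⟩
    · exact (integrableOn_const_iff).mpr (Or.inr hQc.measure_lt_top)
    · refine (ae_restrict_iff' hQm).2 (Filter.Eventually.of_forall fun p hp => ?_)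
      intro t _
      exact hderE t p hp
  -- the divergence terms
  set H1 : ℝ → ℝ×ℝ → ℝ := fun τ p =>
    (a3x (τ,p.1,p.2) * V1 (τ,p.1,p.2) + V3 (τ,p.1,p.2) * a1x (τ,p.1,p.2))
        * ((V1 (τ,p.1,p.2) ^ 2 + V2 (τ,p.1,p.2) ^ 2) / 2 + g * V3 (τ,p.1,p.2))
      + V3 (τ,p.1,p.2) * V1 (τ,p.1,p.2)
        * (V1 (τ,p.1,p.2) * a1x (τ,p.1,p.2) + V2 (τ,p.1,p.2) * a2x (τ,p.1,p.2)
            + g * a3x (τ,p.1,p.2)) with hH1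
  set H2 : ℝ → ℝ×ℝ → ℝ := fun τ p =>
    (a3y (τ,p.1,p.2) * V2 (τ,p.1,p.2) + V3 (τ,p.1,p.2) * a2y (τ,p.1,p.2))
        * ((V1 (τ,p.1,p.2) ^ 2 + V2 (τ,p.1,p.2) ^ 2) / 2 + g * V3 (τ,p.1,p.2))
      + V3 (τ,p.1,p.2) * V2 (τ,p.1,p.2)
        * (V1 (τ,p.1,p.2) * a1y (τ,p.1,p.2) + V2 (τ,p.1,p.2) * a2y (τ,p.1,p.2)
            + g * a3y (τ,p.1,p.2)) with hH2
  -- pointwise identity in the interior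
  have hZ1 : ∀ (τ : ℝ) (p : ℝ×ℝ), p.1 ∈ Set.Ioo (0:ℝ) 1 → p.2 ∈ Set.Ioo (0:ℝ) 1 →
      ET (τ,p.1,p.2) = -(H1 τ p + H2 τ p) := by
    rintro τ ⟨x,y⟩ hx hy
    have hxI := Set.Ioo_subset_Icc_self hx
    have hyI := Set.Ioo_subset_Icc_self hy
    have hu1t := (pt1 (t := τ) hxI hyI).deriv
    have hu2t := (pt2 (t := τ) hxI hyI).deriv
    have hDt := (pt3 (t := τ) hxI hyI).deriv
    have hPx : deriv (fun a => ((u1 τ a y) ^ 2 + (u2 τ a y) ^ 2) / 2 + g * D τ a y) x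
        = V1 (τ,x,y) * a1x (τ,x,y) + V2 (τ,x,y) * a2x (τ,x,y) + g * a3x (τ,x,y) := by
      have h := ((((px1 (t := τ) hx hyI).pow 2).add ((px2 (t := τ) hx hyI).pow 2)).div_const 2).add
        ((px3 (t := τ) hx hyI).const_mul g)
      refine h.deriv.trans ?_
      push_cast
      simp only [hV1, hV2, hV3]
      ring
    have hPy : deriv (fun b => ((u1 τ x b) ^ 2 + (u2 τ x b) ^ 2) / 2 + g * D τ x b) y
        = V1 (τ,x,y) * a1y (τ,x,y) + V2 (τ,x,y) * a2y (τ,x,y) + g * a3y (τ,x,y) := by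
      have h := ((((py1 (t := τ) hxI hy).pow 2).add ((py2 (t := τ) hxI hy).pow 2)).div_const 2).add
        ((py3 (t := τ) hxI hy).const_mul g)
      refine h.deriv.trans ?_
      push_cast
      simp only [hV1, hV2, hV3]
      ring
    have hAx : deriv (fun a => D τ a y * u1 τ a y) x
        = a3x (τ,x,y) * V1 (τ,x,y) + V3 (τ,x,y) * a1x (τ,x,y) := by
      exact ((px3 (t := τ) hx hyI).mul (px1 (t := τ) hx hyI)).deriv
    have hBy : deriv (fun b => D τ x b * u2 τ x b) y
        = a3y (τ,x,y) * V2 (τ,x,y) + V3 (τ,x,y) * a2y (τ,x,y) := by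
      exact ((py3 (t := τ) hxI hy).mul (py2 (t := τ) hxI hy)).deriv
    have e1 := hmom1 τ x y ⟨hxI, hyI⟩
    have e2 := hmom2 τ x y ⟨hxI, hyI⟩
    have e3 := hcont τ x y ⟨hxI, hyI⟩
    rw [hu1t, hPx] at e1
    rw [hu2t, hPy] at e2
    rw [hDt, hAx, hBy] at e3
    simp only [hET, hH1, hH2, hV1, hV2, hV3] at e1 e2 e3 ⊢
    linear_combination (((u1 τ x y) ^ 2 + (u2 τ x y) ^ 2) / 2 + g * D τ x y) * e3
      + (D τ x y * u1 τ x y) * e1 + (D τ x y * u2 τ x y) * e2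
  -- the boundary of the square is null
  have hnull : volume ((Set.Icc (0:ℝ) 1 ×ˢ Set.Icc (0:ℝ) 1)
      \ (Set.Ioo (0:ℝ) 1 ×ˢ Set.Ioo (0:ℝ) 1)) = 0 := by
    have hsub : (Set.Icc (0:ℝ) 1 ×ˢ Set.Icc (0:ℝ) 1) \ (Set.Ioo (0:ℝ) 1 ×ˢ Set.Ioo (0:ℝ) 1)
        ⊆ (({0,1} : Set ℝ) ×ˢ Set.Icc (0:ℝ) 1) ∪ (Set.Icc (0:ℝ) 1 ×ˢ ({0,1} : Set ℝ)) := by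
      rintro ⟨x,y⟩ ⟨⟨hx,hy⟩, hn⟩
      by_cases h : x ∈ Set.Ioo (0:ℝ) 1
      · right
        refine ⟨hx, ?_⟩
        have hy' : y ∉ Set.Ioo (0:ℝ) 1 := fun hy' => hn ⟨h, hy'⟩
        simp only [Set.mem_Ioo, not_and, not_lt] at hy'
        rcases lt_or_eq_of_le hy.1 with h0 | h0
        · exact Or.inr (le_antisymm hy.2 (hy' h0))
        · exact Or.inl h0.symm
      · left
        refine ⟨?_, hy⟩
        simp only [Set.mem_Ioo, not_and, not_lt] at h
        rcases lt_or_eq_of_le hx.1 with h0 | h0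
        · exact Or.inr (le_antisymm hx.2 (h h0))
        · exact Or.inl h0.symm
    refine measure_mono_null hsub (measure_union_null ?_ ?_)
    · rw [Measure.volume_eq_prod, Measure.prod_prod,
        Set.Finite.measure_zero (Set.toFinite _) volume, zero_mul]
    · rw [Measure.volume_eq_prod, Measure.prod_prod,
        Set.Finite.measure_zero (Set.toFinite ({0,1} : Set ℝ)) volume, mul_zero]
  -- product measure decomposition
  have hprod : (volume : Measure (ℝ×ℝ)).restrict (Set.Icc (0:ℝ) 1 ×ˢ Set.Icc (0:ℝ) 1)
      = (volume.restrict (Set.Icc (0:ℝ) 1)).prod (volume.restrict (Set.Icc (0:ℝ) 1)) := by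
    rw [Measure.prod_restrict, ← Measure.volume_eq_prod]
  -- ∫ H1 = 0
  have hint1 : ∀ τ : ℝ, ∫ p in Set.Icc (0:ℝ) 1 ×ˢ Set.Icc (0:ℝ) 1, H1 τ p = 0 := by
    intro τ
    have hH1c : ContinuousOn (H1 τ) (Set.Icc (0:ℝ) 1 ×ˢ Set.Icc (0:ℝ) 1) := by
      simp only [hH1]
      exact (((hembp τ hca3x).mul (hembp τ hcV1)).add
          ((hembp τ hcV3).mul (hembp τ hca1x))).mul
          (((((hembp τ hcV1).pow 2).add ((hembp τ hcV2).pow 2)).div_const 2).add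
            (continuousOn_const.mul (hembp τ hcV3))) |>.add
        ((((hembp τ hcV3).mul (hembp τ hcV1))).mul
          ((((hembp τ hcV1).mul (hembp τ hca1x)).add
            ((hembp τ hcV2).mul (hembp τ hca2x))).add
            (continuousOn_const.mul (hembp τ hca3x))))
    have hH1i : IntegrableOn (H1 τ) (Set.Icc (0:ℝ) 1 ×ˢ Set.Icc (0:ℝ) 1) volume :=
      ContinuousOn.integrableOn_compact hQc hH1c
    have key : ∀ y ∈ Set.Icc (0:ℝ) 1, ∫ x in Set.Icc (0:ℝ) 1, H1 τ (x,y) = 0 := by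
      intro y hy
      have hΨc : ContinuousOn (fun x => D τ x y * u1 τ x y
          * (((u1 τ x y) ^ 2 + (u2 τ x y) ^ 2) / 2 + g * D τ x y)) (Set.Icc (0:ℝ) 1) :=
        ((hslx τ y hy hcV3).mul (hslx τ y hy hcV1)).mul
          (((((hslx τ y hy hcV1).pow 2).add ((hslx τ y hy hcV2).pow 2)).div_const 2).add
            (continuousOn_const.mul (hslx τ y hy hcV3)))
      have hder : ∀ x ∈ Set.Ioo (0:ℝ) 1, HasDerivWithinAt (fun x => D τ x y * u1 τ x y
          * (((u1 τ x y) ^ 2 + (u2 τ x y) ^ 2) / 2 + g * D τ x y))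
          (H1 τ (x,y)) (Set.Ioi x) x := by
        intro x hx
        have hxI := Set.Ioo_subset_Icc_self hx
        have hA := pxw3 (t := τ) hxI hy
        have hB := pxw1 (t := τ) hxI hy
        have hB2 := pxw2 (t := τ) hxI hy
        have h := (hA.mul hB).mul ((((hB.pow 2).add (hB2.pow 2)).div_const 2).add
          (hA.const_mul g))
        have h' : HasDerivWithinAt (fun x => D τ x y * u1 τ x y
            * (((u1 τ x y) ^ 2 + (u2 τ x y) ^ 2) / 2 + g * D τ x y))
            (H1 τ (x,y)) (Set.Icc (0:ℝ) 1) x := by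
          refine h.congr_deriv ?_
          simp only [hH1, hV1, hV2, hV3, Pi.add_apply, Pi.mul_apply, Pi.pow_apply]
          push_cast
          ring
        refine h'.mono_of_mem_nhdsWithin ?_
        exact Filter.mem_of_superset (Ioc_mem_nhdsGT_of_mem ⟨le_rfl, hx.2⟩)
          (fun z hz => ⟨le_trans hx.1.le hz.1.le, hz.2⟩)
      have hii : IntervalIntegrable (fun x => H1 τ (x,y)) volume 0 1 := by
        apply ContinuousOn.intervalIntegrable
        rw [Set.uIcc_of_le zero_le_one]
        simp only [hH1]
        exact (((hslx τ y hy hca3x).mul (hslx τ y hy hcV1)).add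
            ((hslx τ y hy hcV3).mul (hslx τ y hy hca1x))).mul
            (((((hslx τ y hy hcV1).pow 2).add ((hslx τ y hy hcV2).pow 2)).div_const 2).add
              (continuousOn_const.mul (hslx τ y hy hcV3))) |>.add
          ((((hslx τ y hy hcV3).mul (hslx τ y hy hcV1))).mul
            ((((hslx τ y hy hcV1).mul (hslx τ y hy hca1x)).add
              ((hslx τ y hy hcV2).mul (hslx τ y hy hca2x))).add
              (continuousOn_const.mul (hslx τ y hy hca3x))))
      have hftc := intervalIntegral.integral_eq_sub_of_hasDeriv_right_of_le zero_le_one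
        hΨc hder hii
      rw [integral_Icc_eq_integral_Ioc, ← intervalIntegral.integral_of_le zero_le_one, hftc,
        (hbc1 τ y hy).1, (hbc1 τ y hy).2]
      ring
    have hH1i' : Integrable (H1 τ)
        ((volume.restrict (Set.Icc (0:ℝ) 1)).prod (volume.restrict (Set.Icc (0:ℝ) 1))) := by
      have h' : Integrable (H1 τ)
          ((volume : Measure (ℝ×ℝ)).restrict (Set.Icc (0:ℝ) 1 ×ˢ Set.Icc (0:ℝ) 1)) := hH1i
      rw [hprod] at h'
      exact h'
    calc ∫ p in Set.Icc (0:ℝ) 1 ×ˢ Set.Icc (0:ℝ) 1, H1 τ p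
        = ∫ y in Set.Icc (0:ℝ) 1, ∫ x in Set.Icc (0:ℝ) 1, H1 τ (x,y) := by
          rw [hprod]
          exact MeasureTheory.integral_prod_symm _ hH1i'
      _ = ∫ _y in Set.Icc (0:ℝ) 1, (0:ℝ) :=
          setIntegral_congr_fun measurableSet_Icc (fun y hy => key y hy)
      _ = 0 := by simp
  -- ∫ H2 = 0
  have hint2 : ∀ τ : ℝ, ∫ p in Set.Icc (0:ℝ) 1 ×ˢ Set.Icc (0:ℝ) 1, H2 τ p = 0 := by
    intro τ
    have hH2c : ContinuousOn (H2 τ) (Set.Icc (0:ℝ) 1 ×ˢ Set.Icc (0:ℝ) 1) := by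
      simp only [hH2]
      exact (((hembp τ hca3y).mul (hembp τ hcV2)).add
          ((hembp τ hcV3).mul (hembp τ hca2y))).mul
          (((((hembp τ hcV1).pow 2).add ((hembp τ hcV2).pow 2)).div_const 2).add
            (continuousOn_const.mul (hembp τ hcV3))) |>.add
        ((((hembp τ hcV3).mul (hembp τ hcV2))).mul
          ((((hembp τ hcV1).mul (hembp τ hca1y)).add
            ((hembp τ hcV2).mul (hembp τ hca2y))).add
            (continuousOn_const.mul (hembp τ hca3y))))
    have hH2i : IntegrableOn (H2 τ) (Set.Icc (0:ℝ) 1 ×ˢ Set.Icc (0:ℝ) 1) volume :=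
      ContinuousOn.integrableOn_compact hQc hH2c
    have key : ∀ x ∈ Set.Icc (0:ℝ) 1, ∫ y in Set.Icc (0:ℝ) 1, H2 τ (x,y) = 0 := by
      intro x hx
      have hΨc : ContinuousOn (fun y => D τ x y * u2 τ x y
          * (((u1 τ x y) ^ 2 + (u2 τ x y) ^ 2) / 2 + g * D τ x y)) (Set.Icc (0:ℝ) 1) :=
        ((hsly τ x hx hcV3).mul (hsly τ x hx hcV2)).mul
          (((((hsly τ x hx hcV1).pow 2).add ((hsly τ x hx hcV2).pow 2)).div_const 2).add
            (continuousOn_const.mul (hsly τ x hx hcV3)))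
      have hder : ∀ y ∈ Set.Ioo (0:ℝ) 1, HasDerivWithinAt (fun y => D τ x y * u2 τ x y
          * (((u1 τ x y) ^ 2 + (u2 τ x y) ^ 2) / 2 + g * D τ x y))
          (H2 τ (x,y)) (Set.Ioi y) y := by
        intro y hy
        have hyI := Set.Ioo_subset_Icc_self hy
        have hA := pyw3 (t := τ) hx hyI
        have hB := pyw2 (t := τ) hx hyI
        have hB1 := pyw1 (t := τ) hx hyI
        have h := (hA.mul hB).mul ((((hB1.pow 2).add (hB.pow 2)).div_const 2).add
          (hA.const_mul g))
        have h' : HasDerivWithinAt (fun y => D τ x y * u2 τ x y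
            * (((u1 τ x y) ^ 2 + (u2 τ x y) ^ 2) / 2 + g * D τ x y))
            (H2 τ (x,y)) (Set.Icc (0:ℝ) 1) y := by
          refine h.congr_deriv ?_
          simp only [hH2, hV1, hV2, hV3, Pi.add_apply, Pi.mul_apply, Pi.pow_apply]
          push_cast
          ring
        refine h'.mono_of_mem_nhdsWithin ?_
        exact Filter.mem_of_superset (Ioc_mem_nhdsGT_of_mem ⟨le_rfl, hy.2⟩)
          (fun z hz => ⟨le_trans hy.1.le hz.1.le, hz.2⟩)
      have hii : IntervalIntegrable (fun y => H2 τ (x,y)) volume 0 1 := by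
        apply ContinuousOn.intervalIntegrable
        rw [Set.uIcc_of_le zero_le_one]
        simp only [hH2]
        exact (((hsly τ x hx hca3y).mul (hsly τ x hx hcV2)).add
            ((hsly τ x hx hcV3).mul (hsly τ x hx hca2y))).mul
            (((((hsly τ x hx hcV1).pow 2).add ((hsly τ x hx hcV2).pow 2)).div_const 2).add
              (continuousOn_const.mul (hsly τ x hx hcV3))) |>.add
          ((((hsly τ x hx hcV3).mul (hsly τ x hx hcV2))).mul
            ((((hsly τ x hx hcV1).mul (hsly τ x hx hca1y)).add
              ((hsly τ x hx hcV2).mul (hsly τ x hx hca2y))).add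
              (continuousOn_const.mul (hsly τ x hx hca3y))))
      have hftc := intervalIntegral.integral_eq_sub_of_hasDeriv_right_of_le zero_le_one
        hΨc hder hii
      rw [integral_Icc_eq_integral_Ioc, ← intervalIntegral.integral_of_le zero_le_one, hftc,
        (hbc2 τ x hx).1, (hbc2 τ x hx).2]
      ring
    have hH2i' : Integrable (H2 τ)
        ((volume.restrict (Set.Icc (0:ℝ) 1)).prod (volume.restrict (Set.Icc (0:ℝ) 1))) := by
      have h' : Integrable (H2 τ)
          ((volume : Measure (ℝ×ℝ)).restrict (Set.Icc (0:ℝ) 1 ×ˢ Set.Icc (0:ℝ) 1)) := hH2i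
      rw [hprod] at h'
      exact h'
    calc ∫ p in Set.Icc (0:ℝ) 1 ×ˢ Set.Icc (0:ℝ) 1, H2 τ p
        = ∫ x in Set.Icc (0:ℝ) 1, ∫ y in Set.Icc (0:ℝ) 1, H2 τ (x,y) := by
          rw [hprod]
          exact MeasureTheory.integral_prod _ hH2i'
      _ = ∫ _x in Set.Icc (0:ℝ) 1, (0:ℝ) :=
          setIntegral_congr_fun measurableSet_Icc (fun x hx => key x hx)
      _ = 0 := by simp
  -- the integral of ET vanishes
  have hZ2 : ∀ τ : ℝ, ∫ p in Set.Icc (0:ℝ) 1 ×ˢ Set.Icc (0:ℝ) 1, ET (τ,p.1,p.2) = 0 := by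
    intro τ
    have hH1c : ContinuousOn (H1 τ) (Set.Icc (0:ℝ) 1 ×ˢ Set.Icc (0:ℝ) 1) := by
      simp only [hH1]
      exact (((hembp τ hca3x).mul (hembp τ hcV1)).add
          ((hembp τ hcV3).mul (hembp τ hca1x))).mul
          (((((hembp τ hcV1).pow 2).add ((hembp τ hcV2).pow 2)).div_const 2).add
            (continuousOn_const.mul (hembp τ hcV3))) |>.add
        ((((hembp τ hcV3).mul (hembp τ hcV1))).mul
          ((((hembp τ hcV1).mul (hembp τ hca1x)).add
            ((hembp τ hcV2).mul (hembp τ hca2x))).add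
            (continuousOn_const.mul (hembp τ hca3x))))
    have hH2c : ContinuousOn (H2 τ) (Set.Icc (0:ℝ) 1 ×ˢ Set.Icc (0:ℝ) 1) := by
      simp only [hH2]
      exact (((hembp τ hca3y).mul (hembp τ hcV2)).add
          ((hembp τ hcV3).mul (hembp τ hca2y))).mul
          (((((hembp τ hcV1).pow 2).add ((hembp τ hcV2).pow 2)).div_const 2).add
            (continuousOn_const.mul (hembp τ hcV3))) |>.add
        ((((hembp τ hcV3).mul (hembp τ hcV2))).mul
          ((((hembp τ hcV1).mul (hembp τ hca1y)).add
            ((hembp τ hcV2).mul (hembp τ hca2y))).add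
            (continuousOn_const.mul (hembp τ hca3y))))
    have hH1i : IntegrableOn (H1 τ) (Set.Icc (0:ℝ) 1 ×ˢ Set.Icc (0:ℝ) 1) volume :=
      ContinuousOn.integrableOn_compact hQc hH1c
    have hH2i : IntegrableOn (H2 τ) (Set.Icc (0:ℝ) 1 ×ˢ Set.Icc (0:ℝ) 1) volume :=
      ContinuousOn.integrableOn_compact hQc hH2c
    have hcongr : ∫ p in Set.Icc (0:ℝ) 1 ×ˢ Set.Icc (0:ℝ) 1, ET (τ,p.1,p.2)
        = ∫ p in Set.Icc (0:ℝ) 1 ×ˢ Set.Icc (0:ℝ) 1, -(H1 τ p + H2 τ p) := by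
      refine setIntegral_congr_ae hQm ?_
      filter_upwards [measure_eq_zero_iff_ae_notMem.mp hnull] with p hnp hp
      by_cases h1 : p.1 ∈ Set.Ioo (0:ℝ) 1 ∧ p.2 ∈ Set.Ioo (0:ℝ) 1
      · exact hZ1 τ p h1.1 h1.2
      · exact absurd ⟨hp, fun hmem => h1 ⟨hmem.1, hmem.2⟩⟩ hnp
    rw [hcongr, integral_neg, integral_add hH1i hH2i, hint1 τ, hint2 τ]
    ring
  have hE0 : ∀ t₀ : ℝ, HasDerivAt (fun t => ∫ p in Set.Icc (0:ℝ) 1 ×ˢ Set.Icc (0:ℝ) 1,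
      (D t p.1 p.2 * ((u1 t p.1 p.2) ^ 2 + (u2 t p.1 p.2) ^ 2) / 2
        + g * (D t p.1 p.2) ^ 2 / 2)) 0 t₀ :=
    fun t₀ => by
      have h := hE t₀
      rwa [hZ2 t₀] at h
  exact is_const_of_deriv_eq_zero (fun t => (hE0 t).differentiableAt)
    (fun t => (hE0 t).deriv) t₁ t₂
end

section
/- Let E be a finite-dimensional real inner product space, H : E → ℝ continuously differentiable, and J : E → (E →ₗ[ℝ] E) a map such that J(z) is skew for every z, i.e. ⟪J(z) v, v⟫ = 0 for all z, v ∈ E. Let Δt ∈ ℝ and suppose z₀, z₁ ∈ E satisfy the energy-preserving Poisson integrator relation z₁ = z₀ + Δt • J((z₀ + z₁)/2) ḡ, where ḡ := ∫₀¹ ∇H(z₀ + s • (z₁ − z₀)) ds is the averaged gradient along the segment from z₀ to z₁. Then H(z₁) = H(z₀). -/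
open scoped RealInnerProductSpace

/-- Exact energy conservation of the energy-preserving Poisson integrator of Cohen and
Hairer: if `J(z)` is skew for every `z` and `z₁ = z₀ + Δt J((z₀+z₁)/2) ḡ` where
`ḡ = ∫₀¹ ∇H(z₀ + s(z₁ − z₀)) ds` is the averaged gradient, then `H(z₁) = H(z₀)`. -/
theorem poisson_integrator_conserves_energy
    {E : Type*} [NormedAddCommGroup E] [InnerProductSpace ℝ E] [FiniteDimensional ℝ E]
    (H : E → ℝ) (hH : ContDiff ℝ 1 H)
    (J : E → (E →ₗ[ℝ] E)) (hJ : ∀ z v, ⟪J z v, v⟫ = 0)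
    (Δt : ℝ) (z₀ z₁ : E)
    (hrel : z₁ = z₀ + Δt • J ((2:ℝ)⁻¹ • (z₀ + z₁))
      (∫ s in (0:ℝ)..1, gradient H (z₀ + s • (z₁ - z₀)))) :
    H z₁ = H z₀ := by
  have hdiff : Differentiable ℝ H := hH.differentiable one_ne_zero
  set v : E := z₁ - z₀ with hv
  set γ : ℝ → E := fun s => z₀ + s • v with hγ
  set g : ℝ → E := fun s => gradient H (γ s) with hg
  have hγc : Continuous γ := by
    exact continuous_const.add (continuous_id.smul continuous_const)
  have hgradc : Continuous (fun x : E => gradient H x) := by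
    simp only [gradient]
    exact (InnerProductSpace.toDual ℝ E).symm.continuous.comp
      (hH.continuous_fderiv one_ne_zero)
  have hgc : Continuous g := hgradc.comp hγc
  have hinner : ∀ s : ℝ, ⟪g s, v⟫ = fderiv ℝ H (γ s) v := by
    intro s
    simp only [hg, gradient, InnerProductSpace.toDual_symm_apply]
  have hderiv : ∀ s ∈ Set.uIcc (0:ℝ) 1, HasDerivAt (fun t => H (γ t)) (⟪g s, v⟫) s := by
    intro s _
    have h2 : HasDerivAt γ v s := by
      have : HasDerivAt (fun t : ℝ => t • v) v s := by
        simpa using (hasDerivAt_id s).smul_const v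
      exact this.const_add z₀
    have h1 := (hdiff (γ s)).hasFDerivAt.comp_hasDerivAt s h2
    rw [hinner s]
    exact h1
  have hcont : ContinuousOn (fun s => ⟪g s, v⟫) (Set.uIcc (0:ℝ) 1) :=
    (hgc.inner continuous_const).continuousOn
  have hftc : ∫ s in (0:ℝ)..1, ⟪g s, v⟫ = H (γ 1) - H (γ 0) :=
    intervalIntegral.integral_eq_sub_of_hasDerivAt hderiv
      (hcont.intervalIntegrable)
  have hγ0 : γ 0 = z₀ := by simp [hγ]
  have hγ1 : γ 1 = z₁ := by simp [hγ, hv]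
  -- pull the inner product out of the integral
  set gbar : E := ∫ s in (0:ℝ)..1, g s with hgbar
  have hswap : ∫ s in (0:ℝ)..1, ⟪g s, v⟫ = ⟪gbar, v⟫ := by
    rw [hgbar, intervalIntegral.integral_of_le (by norm_num : (0:ℝ) ≤ 1),
      intervalIntegral.integral_of_le (by norm_num : (0:ℝ) ≤ 1)]
    have hint : MeasureTheory.Integrable g
        (MeasureTheory.volume.restrict (Set.Ioc (0:ℝ) 1)) :=
      hgc.integrableOn_Ioc
    calc ∫ s in Set.Ioc (0:ℝ) 1, ⟪g s, v⟫
        = ∫ s in Set.Ioc (0:ℝ) 1, ⟪v, g s⟫ := by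
          simp_rw [real_inner_comm]
      _ = ⟪v, ∫ s in Set.Ioc (0:ℝ) 1, g s⟫ := integral_inner hint v
      _ = ⟪∫ s in Set.Ioc (0:ℝ) 1, g s, v⟫ := real_inner_comm _ _
  have hvz : v = Δt • J ((2:ℝ)⁻¹ • (z₀ + z₁)) gbar := by
    rw [hv]
    nth_rewrite 1 [hrel]
    exact add_sub_cancel_left z₀ _
  have hzero : ⟪gbar, v⟫ = 0 := by
    rw [hvz, real_inner_smul_right, real_inner_comm, hJ]
    ring
  have := hftc
  rw [hswap, hzero, hγ0, hγ1] at this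
  linarith
end

section
/- Let E be a finite-dimensional real inner product space, A : E →ₗ[ℝ] E a symmetric linear map (⟪A x, y⟫ = ⟪x, A y⟫ for all x, y), b ∈ E, and define the quadratic Hamiltonian H(z) := ½ ⟪A z, z⟫ + ⟪b, z⟫. Let J : E → (E →ₗ[ℝ] E) satisfy ⟪J(z) v, v⟫ = 0 for all z, v ∈ E. Let Δt ∈ ℝ and suppose z₀, z₁ ∈ E satisfy the implicit midpoint relation z₁ = z₀ + Δt • J(m)(A m + b) with m := (z₀ + z₁)/2. Then H(z₁) = H(z₀). -/
open scoped RealInnerProductSpace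

/-- The implicit midpoint rule exactly conserves quadratic Hamiltonians
`H(z) = ½⟪Az, z⟫ + ⟪b, z⟫` (with `A` symmetric) for systems `ż = J(z)∇H(z)` with skew
structure operator `J`: if `z₁ = z₀ + Δt J(m)(A m + b)` with `m = (z₀ + z₁)/2`, then
`H(z₁) = H(z₀)`. Note `A m + b = ∇H(m)`. -/
theorem implicit_midpoint_conserves_quadratic_hamiltonian
    {E : Type*} [NormedAddCommGroup E] [InnerProductSpace ℝ E] [FiniteDimensional ℝ E]
    (A : E →ₗ[ℝ] E) (hA : ∀ x y : E, ⟪A x, y⟫ = ⟪x, A y⟫) (b : E)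
    (J : E → (E →ₗ[ℝ] E)) (hJ : ∀ z v, ⟪J z v, v⟫ = 0)
    (Δt : ℝ) (z₀ z₁ : E)
    (hrel : z₁ = z₀ + Δt • J ((2:ℝ)⁻¹ • (z₀ + z₁)) (A ((2:ℝ)⁻¹ • (z₀ + z₁)) + b)) :
    (1/2 : ℝ) * ⟪A z₁, z₁⟫ + ⟪b, z₁⟫ = (1/2 : ℝ) * ⟪A z₀, z₀⟫ + ⟪b, z₀⟫ := by
  set m := (2:ℝ)⁻¹ • (z₀ + z₁) with hm
  set w := A m + b with hw
  have hd : z₁ - z₀ = Δt • J m w := by rw [hrel]; abel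
  have h0 : ⟪w, z₁ - z₀⟫ = 0 := by
    rw [hd, real_inner_smul_right, real_inner_comm, hJ, mul_zero]
  have hAm : ⟪A m, z₁ - z₀⟫
      = (2:ℝ)⁻¹ * (⟪A z₀, z₁⟫ - ⟪A z₀, z₀⟫ + (⟪A z₁, z₁⟫ - ⟪A z₁, z₀⟫)) := by
    simp [hm, map_smul, map_add, inner_smul_left, inner_add_left, inner_sub_right]
    ring
  have hsym : ⟪A z₀, z₁⟫ = ⟪A z₁, z₀⟫ := by
    rw [hA, real_inner_comm]
  have hb : ⟪b, z₁ - z₀⟫ = ⟪b, z₁⟫ - ⟪b, z₀⟫ := inner_sub_right ..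
  have := h0
  rw [hw, inner_add_left, hAm, hb] at this
  rw [hsym] at this
  linarith
end

section
/- Fix real constants R₀ > 0, Ω, u₀, g ≠ 0, h₀. For p = (x, y, z) ∈ ℝ³, define the solid-body velocity field u(p) := (u₀/R₀) (−y, x, 0), the Coriolis parameter f(p) := 2Ω z / R₀, and the depth D(p) := h₀ − (R₀ Ω u₀ + u₀²/2) z² / (R₀² g). Then for every p with x² + y² + z² = R₀², the vector ( (p/R₀) · (∇ × u)(p) + f(p) ) • ( (p/R₀) × u(p) ) + ∇( ½|u|² + g D )(p) is a scalar multiple of p (i.e. lies in the real span of p). Here ∇ × u is the usual curl in ℝ³, × is the cross product, and ∇ is the gradient in ℝ³. -/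
private lemma deriv_quad (c C t : ℝ) : deriv (fun a : ℝ => c * a ^ 2 + C) t = 2 * c * t := by
  have h := (((hasDerivAt_pow 2 t).const_mul c).add_const C).deriv
  simpa using h.trans (by ring)

private lemma deriv_lin (c C t : ℝ) : deriv (fun a : ℝ => c * a + C) t = c := by
  have h := (((hasDerivAt_id t).const_mul c).add_const C).deriv
  simpa using h

/-- Williamson test case 2 (solid body rotation) is a steady state of the rotating
shallow water equations on the sphere of radius `R₀`: with velocity
`u(p) = (u₀/R₀)(−y, x, 0)`, Coriolis parameter `f(p) = 2Ωz/R₀` and depth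
`D(p) = h₀ − (R₀Ωu₀ + u₀²/2) z²/(R₀²g)`, at every point `p` of the sphere the vector
`((p/R₀)·(∇×u)(p) + f(p)) ((p/R₀) × u(p)) + ∇(½|u|² + gD)(p)` is normal to the sphere,
i.e. a scalar multiple of `p`. -/
theorem williamson2_steady_state
    (R₀ Om u₀ g h₀ : ℝ) (hR₀ : 0 < R₀) (hg : g ≠ 0)
    (u1 u2 u3 : ℝ → ℝ → ℝ → ℝ) (f D : ℝ → ℝ → ℝ → ℝ)
    (hu1 : ∀ x y z, u1 x y z = (u₀ / R₀) * (-y))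
    (hu2 : ∀ x y z, u2 x y z = (u₀ / R₀) * x)
    (hu3 : ∀ x y z, u3 x y z = 0)
    (hf : ∀ x y z, f x y z = 2 * Om * z / R₀)
    (hD : ∀ x y z, D x y z = h₀ - (R₀ * Om * u₀ + u₀ ^ 2 / 2) * z ^ 2 / (R₀ ^ 2 * g))
    (x y z : ℝ) (hsphere : x ^ 2 + y ^ 2 + z ^ 2 = R₀ ^ 2) :
    -- curl of u
    let c1 := deriv (fun b => u3 x b z) y - deriv (fun c => u2 x y c) z
    let c2 := deriv (fun c => u1 x y c) z - deriv (fun a => u3 a y z) x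
    let c3 := deriv (fun a => u2 a y z) x - deriv (fun b => u1 x b z) y
    -- absolute vorticity (p/R₀)·(∇×u) + f
    let ζ := (x * c1 + y * c2 + z * c3) / R₀ + f x y z
    -- w = (p/R₀) × u
    let w1 := (y * u3 x y z - z * u2 x y z) / R₀
    let w2 := (z * u1 x y z - x * u3 x y z) / R₀
    let w3 := (x * u2 x y z - y * u1 x y z) / R₀
    -- Bernoulli function B = ½|u|² + gD
    let B : ℝ → ℝ → ℝ → ℝ := fun a b c =>
      ((u1 a b c) ^ 2 + (u2 a b c) ^ 2 + (u3 a b c) ^ 2) / 2 + g * D a b c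
    ∃ lam : ℝ,
      ζ * w1 + deriv (fun a => B a y z) x = lam * x ∧
      ζ * w2 + deriv (fun b => B x b z) y = lam * y ∧
      ζ * w3 + deriv (fun c => B x y c) z = lam * z := by
  intro c1 c2 c3 ζ w1 w2 w3 B
  have hR : R₀ ≠ 0 := ne_of_gt hR₀
  have e1 : c1 = 0 := by
    simp only [c1, hu2, hu3]; simp
  have e2 : c2 = 0 := by
    simp only [c2, hu1, hu3]; simp
  have e3 : c3 = 2 * (u₀ / R₀) := by
    have hA : (fun a => u2 a y z) = fun a => (u₀ / R₀) * a + 0 := by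
      funext a; rw [hu2]; ring
    have hB : (fun b => u1 x b z) = fun b => (-(u₀ / R₀)) * b + 0 := by
      funext b; rw [hu1]; ring
    simp only [c3, hA, hB, deriv_lin]; ring
  have hx : deriv (fun a => B a y z) x = (u₀ / R₀) ^ 2 * x := by
    have : (fun a => B a y z) = fun a =>
        ((u₀ / R₀) ^ 2 / 2) * a ^ 2
          + (((u₀ / R₀) * (-y)) ^ 2 / 2
            + g * (h₀ - (R₀ * Om * u₀ + u₀ ^ 2 / 2) * z ^ 2 / (R₀ ^ 2 * g))) := by
      funext a; simp only [B, hu1, hu2, hu3, hD]; ring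
    rw [this, deriv_quad]; ring
  have hy : deriv (fun b => B x b z) y = (u₀ / R₀) ^ 2 * y := by
    have : (fun b => B x b z) = fun b =>
        ((u₀ / R₀) ^ 2 / 2) * b ^ 2
          + (((u₀ / R₀) * x) ^ 2 / 2
            + g * (h₀ - (R₀ * Om * u₀ + u₀ ^ 2 / 2) * z ^ 2 / (R₀ ^ 2 * g))) := by
      funext b; simp only [B, hu1, hu2, hu3, hD]; ring
    rw [this, deriv_quad]; ring
  have hz : deriv (fun c => B x y c) z =
      -(2 * (R₀ * Om * u₀ + u₀ ^ 2 / 2) / R₀ ^ 2) * z := by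
    have : (fun c => B x y c) = fun c =>
        (-( (R₀ * Om * u₀ + u₀ ^ 2 / 2) / R₀ ^ 2)) * c ^ 2
          + ((((u₀ / R₀) * (-y)) ^ 2 + ((u₀ / R₀) * x) ^ 2) / 2 + g * h₀) := by
      funext c; simp only [B, hu1, hu2, hu3, hD]
      field_simp
      ring
    rw [this, deriv_quad]; ring
  have hζ : ζ = (2 * u₀ / R₀ ^ 2 + 2 * Om / R₀) * z := by
    simp only [ζ, e1, e2, e3, hf]; field_simp; ring
  have hw1 : w1 = -(u₀ / R₀ ^ 2) * (z * x) := by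
    simp only [w1, hu2, hu3]; field_simp; ring
  have hw2 : w2 = -(u₀ / R₀ ^ 2) * (z * y) := by
    simp only [w2, hu1, hu3]; field_simp; ring
  have hw3 : w3 = (u₀ / R₀ ^ 2) * (x ^ 2 + y ^ 2) := by
    simp only [w3, hu1, hu2]; field_simp; ring
  refine ⟨u₀ ^ 2 / R₀ ^ 2 - (2 * u₀ ^ 2 / R₀ ^ 4 + 2 * Om * u₀ / R₀ ^ 3) * z ^ 2, ?_, ?_, ?_⟩
  · rw [hζ, hw1, hx]; field_simp; ring
  · rw [hζ, hw2, hy]; field_simp; ring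
  · rw [hζ, hw3, hz]
    have hz2 : x ^ 2 + y ^ 2 = R₀ ^ 2 - z ^ 2 := by linarith
    rw [hz2]; field_simp; ring
end

section
/- Let Q = [0,1]² ⊆ ℝ² and fix τ ∈ ℝ and a time t. Let q, D : ℝ × Q → ℝ, F : ℝ × Q → ℝ², and γ : Q → ℝ be continuously differentiable (with qD continuously differentiable in t), with D(t, ·) > 0 on Q, and suppose F(t, ·) satisfies the slip boundary condition: F₁(t,0,y) = F₁(t,1,y) = 0 for all y ∈ [0,1] and F₂(t,x,0) = F₂(t,x,1) = 0 for all x ∈ [0,1]. Then, writing R := ∂ₜ(qD) + ∇·(qF) for the potential vorticity residual at time t, the following integration-by-parts identity holds: ∫_Q γ ∂ₜ(qD) dx − ∫_Q ∇γ · ( (q − (τ/D) R) F ) dx = ∫_Q ( γ + (τ/D) F·∇γ ) R dx. -/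
open MeasureTheory

/-- The potential vorticity residual `R = ∂ₜ(qD) + ∇·(qF)` at time `t` and point `(x,y)`. -/
noncomputable def pvResidual (q D F1 F2 : ℝ → ℝ → ℝ → ℝ) (t x y : ℝ) : ℝ :=
  deriv (fun s => q s x y * D s x y) t
    + deriv (fun a => q t a y * F1 t a y) x
    + deriv (fun b => q t x b * F2 t x b) y

open Set

private lemma slice3_t {f : ℝ × ℝ × ℝ → ℝ}
    (hf : ContDiffOn ℝ 1 f (Set.univ ×ˢ (Icc (0:ℝ) 1 ×ˢ Icc (0:ℝ) 1)))
    (t : ℝ) {x y : ℝ} (hx : x ∈ Icc (0:ℝ) 1) (hy : y ∈ Icc (0:ℝ) 1) :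
    HasDerivAt (fun s => f (s, x, y))
      (fderivWithin ℝ f (Set.univ ×ˢ (Icc (0:ℝ) 1 ×ˢ Icc (0:ℝ) 1)) (t, x, y) (1, 0, 0)) t := by
  have hmem : ((t, x, y) : ℝ × ℝ × ℝ) ∈ Set.univ ×ˢ (Icc (0:ℝ) 1 ×ˢ Icc (0:ℝ) 1) :=
    ⟨trivial, hx, hy⟩
  have hd := ((hf.differentiableOn one_ne_zero) _ hmem).hasFDerivWithinAt
  have hc : HasDerivAt (fun s : ℝ => ((s, x, y) : ℝ × ℝ × ℝ)) (1, 0, 0) t :=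
    (hasDerivAt_id' t).prodMk ((hasDerivAt_const t x).prodMk (hasDerivAt_const t y))
  have h := hd.comp_hasDerivWithinAt t (hc.hasDerivWithinAt (s := Set.univ))
    (fun s _ => by exact ⟨trivial, hx, hy⟩)
  exact h.hasDerivAt Filter.univ_mem

private lemma slice3_x {f : ℝ × ℝ × ℝ → ℝ}
    (hf : ContDiffOn ℝ 1 f (Set.univ ×ˢ (Icc (0:ℝ) 1 ×ˢ Icc (0:ℝ) 1)))
    (t : ℝ) {x y : ℝ} (hx : x ∈ Ioo (0:ℝ) 1) (hy : y ∈ Icc (0:ℝ) 1) :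
    HasDerivAt (fun a => f (t, a, y))
      (fderivWithin ℝ f (Set.univ ×ˢ (Icc (0:ℝ) 1 ×ˢ Icc (0:ℝ) 1)) (t, x, y) (0, 1, 0)) x := by
  have hmem : ((t, x, y) : ℝ × ℝ × ℝ) ∈ Set.univ ×ˢ (Icc (0:ℝ) 1 ×ˢ Icc (0:ℝ) 1) :=
    ⟨trivial, Ioo_subset_Icc_self hx, hy⟩
  have hd := ((hf.differentiableOn one_ne_zero) _ hmem).hasFDerivWithinAt
  have hc : HasDerivAt (fun a : ℝ => ((t, a, y) : ℝ × ℝ × ℝ)) (0, 1, 0) x :=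
    (hasDerivAt_const x t).prodMk ((hasDerivAt_id' x).prodMk (hasDerivAt_const x y))
  have h := hd.comp_hasDerivWithinAt x (hc.hasDerivWithinAt (s := Icc 0 1))
    (fun a ha => by exact ⟨trivial, ha, hy⟩)
  exact h.hasDerivAt (Icc_mem_nhds hx.1 hx.2)

private lemma slice3_y {f : ℝ × ℝ × ℝ → ℝ}
    (hf : ContDiffOn ℝ 1 f (Set.univ ×ˢ (Icc (0:ℝ) 1 ×ˢ Icc (0:ℝ) 1)))
    (t : ℝ) {x y : ℝ} (hx : x ∈ Icc (0:ℝ) 1) (hy : y ∈ Ioo (0:ℝ) 1) :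
    HasDerivAt (fun b => f (t, x, b))
      (fderivWithin ℝ f (Set.univ ×ˢ (Icc (0:ℝ) 1 ×ˢ Icc (0:ℝ) 1)) (t, x, y) (0, 0, 1)) y := by
  have hmem : ((t, x, y) : ℝ × ℝ × ℝ) ∈ Set.univ ×ˢ (Icc (0:ℝ) 1 ×ˢ Icc (0:ℝ) 1) :=
    ⟨trivial, hx, Ioo_subset_Icc_self hy⟩
  have hd := ((hf.differentiableOn one_ne_zero) _ hmem).hasFDerivWithinAt
  have hc : HasDerivAt (fun b : ℝ => ((t, x, b) : ℝ × ℝ × ℝ)) (0, 0, 1) y :=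
    (hasDerivAt_const y t).prodMk ((hasDerivAt_const y x).prodMk (hasDerivAt_id' y))
  have h := hd.comp_hasDerivWithinAt y (hc.hasDerivWithinAt (s := Icc 0 1))
    (fun b hb => by exact ⟨trivial, hx, hb⟩)
  exact h.hasDerivAt (Icc_mem_nhds hy.1 hy.2)

private lemma slice2_x {g : ℝ × ℝ → ℝ}
    (hg : ContDiffOn ℝ 1 g (Icc (0:ℝ) 1 ×ˢ Icc (0:ℝ) 1))
    {x y : ℝ} (hx : x ∈ Ioo (0:ℝ) 1) (hy : y ∈ Icc (0:ℝ) 1) :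
    HasDerivAt (fun a => g (a, y))
      (fderivWithin ℝ g (Icc (0:ℝ) 1 ×ˢ Icc (0:ℝ) 1) (x, y) (1, 0)) x := by
  have hmem : ((x, y) : ℝ × ℝ) ∈ Icc (0:ℝ) 1 ×ˢ Icc (0:ℝ) 1 :=
    ⟨Ioo_subset_Icc_self hx, hy⟩
  have hd := ((hg.differentiableOn one_ne_zero) _ hmem).hasFDerivWithinAt
  have hc : HasDerivAt (fun a : ℝ => ((a, y) : ℝ × ℝ)) (1, 0) x :=
    (hasDerivAt_id' x).prodMk (hasDerivAt_const x y)
  have h := hd.comp_hasDerivWithinAt x (hc.hasDerivWithinAt (s := Icc 0 1))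
    (fun a ha => by exact ⟨ha, hy⟩)
  exact h.hasDerivAt (Icc_mem_nhds hx.1 hx.2)

private lemma slice2_y {g : ℝ × ℝ → ℝ}
    (hg : ContDiffOn ℝ 1 g (Icc (0:ℝ) 1 ×ˢ Icc (0:ℝ) 1))
    {x y : ℝ} (hx : x ∈ Icc (0:ℝ) 1) (hy : y ∈ Ioo (0:ℝ) 1) :
    HasDerivAt (fun b => g (x, b))
      (fderivWithin ℝ g (Icc (0:ℝ) 1 ×ˢ Icc (0:ℝ) 1) (x, y) (0, 1)) y := by
  have hmem : ((x, y) : ℝ × ℝ) ∈ Icc (0:ℝ) 1 ×ˢ Icc (0:ℝ) 1 :=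
    ⟨hx, Ioo_subset_Icc_self hy⟩
  have hd := ((hg.differentiableOn one_ne_zero) _ hmem).hasFDerivWithinAt
  have hc : HasDerivAt (fun b : ℝ => ((x, b) : ℝ × ℝ)) (0, 1) y :=
    (hasDerivAt_const y x).prodMk (hasDerivAt_id' y)
  have h := hd.comp_hasDerivWithinAt y (hc.hasDerivWithinAt (s := Icc 0 1))
    (fun b hb => ⟨hx, hb⟩)
  exact h.hasDerivAt (Icc_mem_nhds hy.1 hy.2)

private lemma null_boundary :
    (volume : Measure (ℝ × ℝ))
      ((Icc (0:ℝ) 1 ×ˢ Icc (0:ℝ) 1) \ (Ioo (0:ℝ) 1 ×ˢ Ioo (0:ℝ) 1)) = 0 := by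
  have hsub : (Icc (0:ℝ) 1 ×ˢ Icc (0:ℝ) 1) \ (Ioo (0:ℝ) 1 ×ˢ Ioo (0:ℝ) 1) ⊆
      (({0, 1} : Set ℝ) ×ˢ (Set.univ : Set ℝ)) ∪ ((Set.univ : Set ℝ) ×ˢ ({0, 1} : Set ℝ)) := by
    rintro ⟨a, b⟩ ⟨⟨ha, hb⟩, hnot⟩
    by_cases hA : a ∈ Ioo (0:ℝ) 1
    · have hB : b ∉ Ioo (0:ℝ) 1 := fun hB => hnot ⟨hA, hB⟩
      right
      refine ⟨trivial, ?_⟩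
      rcases eq_or_lt_of_le hb.1 with h | h
      · exact Or.inl h.symm
      · rcases eq_or_lt_of_le hb.2 with h' | h'
        · exact Or.inr h'
        · exact absurd ⟨h, h'⟩ hB
    · left
      refine ⟨?_, trivial⟩
      rcases eq_or_lt_of_le ha.1 with h | h
      · exact Or.inl h.symm
      · rcases eq_or_lt_of_le ha.2 with h' | h'
        · exact Or.inr h'
        · exact absurd ⟨h, h'⟩ hA
  refine measure_mono_null hsub (measure_union_null ?_ ?_) <;>
    · rw [MeasureTheory.Measure.volume_eq_prod, MeasureTheory.Measure.prod_prod]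
      simp [Set.Finite.measure_zero (Set.toFinite ({0, 1} : Set ℝ)) volume]

private lemma ae_eq_on_Q2 {f g : ℝ × ℝ → ℝ}
    (h : ∀ p ∈ Ioo (0:ℝ) 1 ×ˢ Ioo (0:ℝ) 1, f p = g p) :
    f =ᶠ[ae (volume.restrict (Icc (0:ℝ) 1 ×ˢ Icc (0:ℝ) 1))] g := by
  rw [Filter.EventuallyEq, ae_restrict_iff' (measurableSet_Icc.prod measurableSet_Icc)]
  rw [ae_iff]
  refine measure_mono_null (fun p hp => ?_) null_boundary
  simp only [Set.mem_setOf_eq] at hp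
  push_neg at hp
  exact ⟨hp.1, fun hm => hp.2 (h p hm)⟩

private noncomputable def cT (q D : ℝ → ℝ → ℝ → ℝ) (t : ℝ) (p : ℝ × ℝ) : ℝ :=
  fderivWithin ℝ (fun p : ℝ × ℝ × ℝ => q p.1 p.2.1 p.2.2 * D p.1 p.2.1 p.2.2)
    (Set.univ ×ˢ (Icc (0:ℝ) 1 ×ˢ Icc (0:ℝ) 1)) (t, p.1, p.2) (1, 0, 0)

private noncomputable def cGx (q F1 : ℝ → ℝ → ℝ → ℝ) (t : ℝ) (p : ℝ × ℝ) : ℝ :=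
  fderivWithin ℝ (fun p : ℝ × ℝ × ℝ => q p.1 p.2.1 p.2.2 * F1 p.1 p.2.1 p.2.2)
    (Set.univ ×ˢ (Icc (0:ℝ) 1 ×ˢ Icc (0:ℝ) 1)) (t, p.1, p.2) (0, 1, 0)

private noncomputable def cHy (q F2 : ℝ → ℝ → ℝ → ℝ) (t : ℝ) (p : ℝ × ℝ) : ℝ :=
  fderivWithin ℝ (fun p : ℝ × ℝ × ℝ => q p.1 p.2.1 p.2.2 * F2 p.1 p.2.1 p.2.2)
    (Set.univ ×ˢ (Icc (0:ℝ) 1 ×ˢ Icc (0:ℝ) 1)) (t, p.1, p.2) (0, 0, 1)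

private noncomputable def cgx (γ : ℝ → ℝ → ℝ) (p : ℝ × ℝ) : ℝ :=
  fderivWithin ℝ (fun p : ℝ × ℝ => γ p.1 p.2) (Icc (0:ℝ) 1 ×ˢ Icc (0:ℝ) 1) p (1, 0)

private noncomputable def cgy (γ : ℝ → ℝ → ℝ) (p : ℝ × ℝ) : ℝ :=
  fderivWithin ℝ (fun p : ℝ × ℝ => γ p.1 p.2) (Icc (0:ℝ) 1 ×ˢ Icc (0:ℝ) 1) p (0, 1)


/-- The SUPG identity on the unit square `Q = [0,1]²`: with the SUPG-modified potential
vorticity `q* = q − (τ/D) R`, where `R = ∂ₜ(qD) + ∇·(qF)` is the potential vorticity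
residual, and with the mass flux `F` satisfying the slip boundary condition at time `t`,
`∫_Q γ ∂ₜ(qD) − ∫_Q ∇γ · (q* F) = ∫_Q (γ + (τ/D) F·∇γ) R`, i.e. the weak potential
vorticity equation with `q` replaced by `q*` is the SUPG discretisation of the potential
vorticity conservation law tested against `γ + (τ/D) F·∇γ`. -/
theorem supg_identity
    (τ t : ℝ) (q D F1 F2 : ℝ → ℝ → ℝ → ℝ) (γ : ℝ → ℝ → ℝ)
    (hq : ContDiffOn ℝ 1 (fun p : ℝ × ℝ × ℝ => q p.1 p.2.1 p.2.2)
      (Set.univ ×ˢ (Set.Icc (0:ℝ) 1 ×ˢ Set.Icc (0:ℝ) 1)))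
    (hD : ContDiffOn ℝ 1 (fun p : ℝ × ℝ × ℝ => D p.1 p.2.1 p.2.2)
      (Set.univ ×ˢ (Set.Icc (0:ℝ) 1 ×ˢ Set.Icc (0:ℝ) 1)))
    (hF1 : ContDiffOn ℝ 1 (fun p : ℝ × ℝ × ℝ => F1 p.1 p.2.1 p.2.2)
      (Set.univ ×ˢ (Set.Icc (0:ℝ) 1 ×ˢ Set.Icc (0:ℝ) 1)))
    (hF2 : ContDiffOn ℝ 1 (fun p : ℝ × ℝ × ℝ => F2 p.1 p.2.1 p.2.2)
      (Set.univ ×ˢ (Set.Icc (0:ℝ) 1 ×ˢ Set.Icc (0:ℝ) 1)))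
    (hγ : ContDiffOn ℝ 1 (fun p : ℝ × ℝ => γ p.1 p.2) (Set.Icc (0:ℝ) 1 ×ˢ Set.Icc (0:ℝ) 1))
    (hDpos : ∀ x y, (x, y) ∈ Set.Icc (0:ℝ) 1 ×ˢ Set.Icc (0:ℝ) 1 → 0 < D t x y)
    (hbc1 : ∀ y, y ∈ Set.Icc (0:ℝ) 1 → F1 t 0 y = 0 ∧ F1 t 1 y = 0)
    (hbc2 : ∀ x, x ∈ Set.Icc (0:ℝ) 1 → F2 t x 0 = 0 ∧ F2 t x 1 = 0) :
    (∫ p in Set.Icc (0:ℝ) 1 ×ˢ Set.Icc (0:ℝ) 1,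
        γ p.1 p.2 * deriv (fun s => q s p.1 p.2 * D s p.1 p.2) t)
    - (∫ p in Set.Icc (0:ℝ) 1 ×ˢ Set.Icc (0:ℝ) 1,
        (deriv (fun a => γ a p.2) p.1
            * ((q t p.1 p.2 - τ / D t p.1 p.2 * pvResidual q D F1 F2 t p.1 p.2)
                * F1 t p.1 p.2)
          + deriv (fun b => γ p.1 b) p.2
            * ((q t p.1 p.2 - τ / D t p.1 p.2 * pvResidual q D F1 F2 t p.1 p.2)
                * F2 t p.1 p.2)))
    = ∫ p in Set.Icc (0:ℝ) 1 ×ˢ Set.Icc (0:ℝ) 1,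
        (γ p.1 p.2 + τ / D t p.1 p.2
            * (F1 t p.1 p.2 * deriv (fun a => γ a p.2) p.1
              + F2 t p.1 p.2 * deriv (fun b => γ p.1 b) p.2))
          * pvResidual q D F1 F2 t p.1 p.2 := by
  have h01 : (0:ℝ) ≤ 1 := zero_le_one
  have hQmeas : MeasurableSet (Set.Icc (0:ℝ) 1 ×ˢ Set.Icc (0:ℝ) 1) :=
    measurableSet_Icc.prod measurableSet_Icc
  have hQcomp : IsCompact (Set.Icc (0:ℝ) 1 ×ˢ Set.Icc (0:ℝ) 1) :=
    isCompact_Icc.prod isCompact_Icc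
  have huS3 : UniqueDiffOn ℝ (Set.univ ×ˢ (Set.Icc (0:ℝ) 1 ×ˢ Set.Icc (0:ℝ) 1)) :=
    (uniqueDiffOn_univ : UniqueDiffOn ℝ (Set.univ : Set ℝ)).prod (uniqueDiffOn_Icc_zero_one.prod uniqueDiffOn_Icc_zero_one)
  have huQ2 : UniqueDiffOn ℝ (Set.Icc (0:ℝ) 1 ×ˢ Set.Icc (0:ℝ) 1) :=
    uniqueDiffOn_Icc_zero_one.prod uniqueDiffOn_Icc_zero_one
  -- pointwise derivative facts
  have hTd : ∀ p : ℝ × ℝ, p ∈ Set.Icc (0:ℝ) 1 ×ˢ Set.Icc (0:ℝ) 1 →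
      HasDerivAt (fun s => q s p.1 p.2 * D s p.1 p.2) (cT q D t p) t :=
    fun p hp => slice3_t (hq.mul hD) t hp.1 hp.2
  have hGd : ∀ p : ℝ × ℝ, p.1 ∈ Set.Ioo (0:ℝ) 1 → p.2 ∈ Set.Icc (0:ℝ) 1 →
      HasDerivAt (fun a => q t a p.2 * F1 t a p.2) (cGx q F1 t p) p.1 :=
    fun p h1 h2 => slice3_x (hq.mul hF1) t h1 h2
  have hHd : ∀ p : ℝ × ℝ, p.1 ∈ Set.Icc (0:ℝ) 1 → p.2 ∈ Set.Ioo (0:ℝ) 1 →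
      HasDerivAt (fun b => q t p.1 b * F2 t p.1 b) (cHy q F2 t p) p.2 :=
    fun p h1 h2 => slice3_y (hq.mul hF2) t h1 h2
  have hgxd : ∀ p : ℝ × ℝ, p.1 ∈ Set.Ioo (0:ℝ) 1 → p.2 ∈ Set.Icc (0:ℝ) 1 →
      HasDerivAt (fun a => γ a p.2) (cgx γ p) p.1 :=
    fun p h1 h2 => slice2_x hγ h1 h2
  have hgyd : ∀ p : ℝ × ℝ, p.1 ∈ Set.Icc (0:ℝ) 1 → p.2 ∈ Set.Ioo (0:ℝ) 1 →
      HasDerivAt (fun b => γ p.1 b) (cgy γ p) p.2 :=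
    fun p h1 h2 => slice2_y hγ h1 h2
  -- continuity facts on Q
  have hjc : ContinuousOn (fun p : ℝ × ℝ => ((t, p.1, p.2) : ℝ × ℝ × ℝ))
      (Set.Icc (0:ℝ) 1 ×ˢ Set.Icc (0:ℝ) 1) :=
    (continuous_const.prodMk (continuous_fst.prodMk continuous_snd)).continuousOn
  have hjm : Set.MapsTo (fun p : ℝ × ℝ => ((t, p.1, p.2) : ℝ × ℝ × ℝ))
      (Set.Icc (0:ℝ) 1 ×ˢ Set.Icc (0:ℝ) 1)
      (Set.univ ×ˢ (Set.Icc (0:ℝ) 1 ×ˢ Set.Icc (0:ℝ) 1)) :=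
    fun p hp => ⟨trivial, hp.1, hp.2⟩
  have hq0 : ContinuousOn (fun p : ℝ × ℝ => q t p.1 p.2) (Set.Icc (0:ℝ) 1 ×ˢ Set.Icc (0:ℝ) 1) :=
    hq.continuousOn.comp hjc hjm
  have hD0 : ContinuousOn (fun p : ℝ × ℝ => D t p.1 p.2) (Set.Icc (0:ℝ) 1 ×ˢ Set.Icc (0:ℝ) 1) :=
    hD.continuousOn.comp hjc hjm
  have hF10 : ContinuousOn (fun p : ℝ × ℝ => F1 t p.1 p.2) (Set.Icc (0:ℝ) 1 ×ˢ Set.Icc (0:ℝ) 1) :=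
    hF1.continuousOn.comp hjc hjm
  have hF20 : ContinuousOn (fun p : ℝ × ℝ => F2 t p.1 p.2) (Set.Icc (0:ℝ) 1 ×ˢ Set.Icc (0:ℝ) 1) :=
    hF2.continuousOn.comp hjc hjm
  have hγ0 : ContinuousOn (fun p : ℝ × ℝ => γ p.1 p.2) (Set.Icc (0:ℝ) 1 ×ˢ Set.Icc (0:ℝ) 1) :=
    hγ.continuousOn
  have hcT0 : ContinuousOn (cT q D t) (Set.Icc (0:ℝ) 1 ×ˢ Set.Icc (0:ℝ) 1) :=
    ((((hq.mul hD).continuousOn_fderivWithin huS3 le_rfl).comp hjc hjm).clm_apply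
      continuousOn_const)
  have hcGx0 : ContinuousOn (cGx q F1 t) (Set.Icc (0:ℝ) 1 ×ˢ Set.Icc (0:ℝ) 1) :=
    ((((hq.mul hF1).continuousOn_fderivWithin huS3 le_rfl).comp hjc hjm).clm_apply
      continuousOn_const)
  have hcHy0 : ContinuousOn (cHy q F2 t) (Set.Icc (0:ℝ) 1 ×ˢ Set.Icc (0:ℝ) 1) :=
    ((((hq.mul hF2).continuousOn_fderivWithin huS3 le_rfl).comp hjc hjm).clm_apply
      continuousOn_const)
  have hcgx0 : ContinuousOn (cgx γ) (Set.Icc (0:ℝ) 1 ×ˢ Set.Icc (0:ℝ) 1) :=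
    ((hγ.continuousOn_fderivWithin huQ2 le_rfl).clm_apply continuousOn_const)
  have hcgy0 : ContinuousOn (cgy γ) (Set.Icc (0:ℝ) 1 ×ˢ Set.Icc (0:ℝ) 1) :=
    ((hγ.continuousOn_fderivWithin huQ2 le_rfl).clm_apply continuousOn_const)
  have hdiv0 : ContinuousOn (fun p : ℝ × ℝ => τ / D t p.1 p.2)
      (Set.Icc (0:ℝ) 1 ×ˢ Set.Icc (0:ℝ) 1) :=
    continuousOn_const.div hD0 (fun p hp => (hDpos p.1 p.2 hp).ne')
  have hRc0 : ContinuousOn (fun p : ℝ × ℝ => cT q D t p + cGx q F1 t p + cHy q F2 t p)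
      (Set.Icc (0:ℝ) 1 ×ˢ Set.Icc (0:ℝ) 1) := (hcT0.add hcGx0).add hcHy0
  -- the continuous versions of the three integrands and of the two divergence pieces
  set C1 : ℝ × ℝ → ℝ := fun p => γ p.1 p.2 * cT q D t p with hC1def
  set C2 : ℝ × ℝ → ℝ := fun p =>
    cgx γ p * ((q t p.1 p.2 - τ / D t p.1 p.2 * (cT q D t p + cGx q F1 t p + cHy q F2 t p))
        * F1 t p.1 p.2)
      + cgy γ p * ((q t p.1 p.2 - τ / D t p.1 p.2 * (cT q D t p + cGx q F1 t p + cHy q F2 t p))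
        * F2 t p.1 p.2) with hC2def
  set C3 : ℝ × ℝ → ℝ := fun p =>
    (γ p.1 p.2 + τ / D t p.1 p.2 * (F1 t p.1 p.2 * cgx γ p + F2 t p.1 p.2 * cgy γ p))
      * (cT q D t p + cGx q F1 t p + cHy q F2 t p) with hC3def
  set CA : ℝ × ℝ → ℝ := fun p =>
    cgx γ p * (q t p.1 p.2 * F1 t p.1 p.2) + γ p.1 p.2 * cGx q F1 t p with hCAdef
  set CB : ℝ × ℝ → ℝ := fun p =>
    cgy γ p * (q t p.1 p.2 * F2 t p.1 p.2) + γ p.1 p.2 * cHy q F2 t p with hCBdef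
  have hC1c : ContinuousOn C1 (Set.Icc (0:ℝ) 1 ×ˢ Set.Icc (0:ℝ) 1) := hγ0.mul hcT0
  have hC2c : ContinuousOn C2 (Set.Icc (0:ℝ) 1 ×ˢ Set.Icc (0:ℝ) 1) :=
    (hcgx0.mul ((hq0.sub (hdiv0.mul hRc0)).mul hF10)).add
      (hcgy0.mul ((hq0.sub (hdiv0.mul hRc0)).mul hF20))
  have hC3c : ContinuousOn C3 (Set.Icc (0:ℝ) 1 ×ˢ Set.Icc (0:ℝ) 1) :=
    (hγ0.add (hdiv0.mul ((hF10.mul hcgx0).add (hF20.mul hcgy0)))).mul hRc0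
  have hCAc : ContinuousOn CA (Set.Icc (0:ℝ) 1 ×ˢ Set.Icc (0:ℝ) 1) :=
    (hcgx0.mul (hq0.mul hF10)).add (hγ0.mul hcGx0)
  have hCBc : ContinuousOn CB (Set.Icc (0:ℝ) 1 ×ˢ Set.Icc (0:ℝ) 1) :=
    (hcgy0.mul (hq0.mul hF20)).add (hγ0.mul hcHy0)
  have hC1i : IntegrableOn C1 (Set.Icc (0:ℝ) 1 ×ˢ Set.Icc (0:ℝ) 1) :=
    hC1c.integrableOn_compact hQcomp
  have hC2i : IntegrableOn C2 (Set.Icc (0:ℝ) 1 ×ˢ Set.Icc (0:ℝ) 1) :=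
    hC2c.integrableOn_compact hQcomp
  have hC3i : IntegrableOn C3 (Set.Icc (0:ℝ) 1 ×ˢ Set.Icc (0:ℝ) 1) :=
    hC3c.integrableOn_compact hQcomp
  have hCAi : IntegrableOn CA (Set.Icc (0:ℝ) 1 ×ˢ Set.Icc (0:ℝ) 1) :=
    hCAc.integrableOn_compact hQcomp
  have hCBi : IntegrableOn CB (Set.Icc (0:ℝ) 1 ×ˢ Set.Icc (0:ℝ) 1) :=
    hCBc.integrableOn_compact hQcomp
  -- a.e. identification of the raw integrands with the continuous versions
  have hpv : ∀ p : ℝ × ℝ, p ∈ Set.Ioo (0:ℝ) 1 ×ˢ Set.Ioo (0:ℝ) 1 →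
      pvResidual q D F1 F2 t p.1 p.2 = cT q D t p + cGx q F1 t p + cHy q F2 t p := by
    intro p hp
    have h1 : p.1 ∈ Set.Icc (0:ℝ) 1 := Set.Ioo_subset_Icc_self hp.1
    have h2 : p.2 ∈ Set.Icc (0:ℝ) 1 := Set.Ioo_subset_Icc_self hp.2
    unfold pvResidual
    rw [(hTd p ⟨h1, h2⟩).deriv, (hGd p hp.1 h2).deriv, (hHd p h1 hp.2).deriv]
  have hI1ae : (fun p : ℝ × ℝ => γ p.1 p.2 * deriv (fun s => q s p.1 p.2 * D s p.1 p.2) t)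
      =ᶠ[ae (volume.restrict (Set.Icc (0:ℝ) 1 ×ˢ Set.Icc (0:ℝ) 1))] C1 := by
    refine ae_eq_on_Q2 fun p hp => ?_
    have h1 : p.1 ∈ Set.Icc (0:ℝ) 1 := Set.Ioo_subset_Icc_self hp.1
    have h2 : p.2 ∈ Set.Icc (0:ℝ) 1 := Set.Ioo_subset_Icc_self hp.2
    rw [hC1def, (hTd p ⟨h1, h2⟩).deriv]
  have hI2ae : (fun p : ℝ × ℝ =>
      deriv (fun a => γ a p.2) p.1
          * ((q t p.1 p.2 - τ / D t p.1 p.2 * pvResidual q D F1 F2 t p.1 p.2) * F1 t p.1 p.2)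
        + deriv (fun b => γ p.1 b) p.2
          * ((q t p.1 p.2 - τ / D t p.1 p.2 * pvResidual q D F1 F2 t p.1 p.2) * F2 t p.1 p.2))
      =ᶠ[ae (volume.restrict (Set.Icc (0:ℝ) 1 ×ˢ Set.Icc (0:ℝ) 1))] C2 := by
    refine ae_eq_on_Q2 fun p hp => ?_
    have h1 : p.1 ∈ Set.Icc (0:ℝ) 1 := Set.Ioo_subset_Icc_self hp.1
    have h2 : p.2 ∈ Set.Icc (0:ℝ) 1 := Set.Ioo_subset_Icc_self hp.2
    rw [hC2def, hpv p hp, (hgxd p hp.1 h2).deriv, (hgyd p h1 hp.2).deriv]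
  have hI3ae : (fun p : ℝ × ℝ =>
      (γ p.1 p.2 + τ / D t p.1 p.2
          * (F1 t p.1 p.2 * deriv (fun a => γ a p.2) p.1
            + F2 t p.1 p.2 * deriv (fun b => γ p.1 b) p.2))
        * pvResidual q D F1 F2 t p.1 p.2)
      =ᶠ[ae (volume.restrict (Set.Icc (0:ℝ) 1 ×ˢ Set.Icc (0:ℝ) 1))] C3 := by
    refine ae_eq_on_Q2 fun p hp => ?_
    have h1 : p.1 ∈ Set.Icc (0:ℝ) 1 := Set.Ioo_subset_Icc_self hp.1
    have h2 : p.2 ∈ Set.Icc (0:ℝ) 1 := Set.Ioo_subset_Icc_self hp.2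
    rw [hC3def, hpv p hp, (hgxd p hp.1 h2).deriv, (hgyd p h1 hp.2).deriv]
  -- the product-restricted measure
  have hres : (volume : Measure (ℝ × ℝ)).restrict (Set.Icc (0:ℝ) 1 ×ˢ Set.Icc (0:ℝ) 1)
      = ((volume : Measure ℝ).restrict (Set.Icc (0:ℝ) 1)).prod
          ((volume : Measure ℝ).restrict (Set.Icc (0:ℝ) 1)) := by
    rw [Measure.volume_eq_prod, ← Measure.prod_restrict]
  -- the divergence integrals vanish
  have hCA0 : ∫ p in Set.Icc (0:ℝ) 1 ×ˢ Set.Icc (0:ℝ) 1, CA p = 0 := by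
    have hswap : ∫ p in Set.Icc (0:ℝ) 1 ×ˢ Set.Icc (0:ℝ) 1, CA p
        = ∫ y in Set.Icc (0:ℝ) 1, ∫ x in Set.Icc (0:ℝ) 1, CA (x, y) := by
      rw [show (∫ p in Set.Icc (0:ℝ) 1 ×ˢ Set.Icc (0:ℝ) 1, CA p)
        = ∫ p, CA p ∂(((volume : Measure ℝ).restrict (Set.Icc (0:ℝ) 1)).prod
          ((volume : Measure ℝ).restrict (Set.Icc (0:ℝ) 1))) from by rw [← hres]]
      exact MeasureTheory.integral_prod_symm CA (hres ▸ hCAi)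
    have hinner : ∀ y ∈ Set.Icc (0:ℝ) 1, ∫ x in Set.Icc (0:ℝ) 1, CA (x, y) = 0 := by
      intro y hy
      have hgs : ContinuousOn (fun x => γ x y) (Set.Icc (0:ℝ) 1) :=
        hγ.continuousOn.comp ((continuous_id.prodMk continuous_const).continuousOn)
          (fun x hx => ⟨hx, hy⟩)
      have hqs : ContinuousOn (fun x => q t x y) (Set.Icc (0:ℝ) 1) :=
        hq.continuousOn.comp
          ((continuous_const.prodMk (continuous_id.prodMk continuous_const)).continuousOn)
          (fun x hx => ⟨trivial, hx, hy⟩)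
      have hF1s : ContinuousOn (fun x => F1 t x y) (Set.Icc (0:ℝ) 1) :=
        hF1.continuousOn.comp
          ((continuous_const.prodMk (continuous_id.prodMk continuous_const)).continuousOn)
          (fun x hx => ⟨trivial, hx, hy⟩)
      have hCAs : ContinuousOn (fun x => CA (x, y)) (Set.Icc (0:ℝ) 1) :=
        hCAc.comp ((continuous_id.prodMk continuous_const).continuousOn)
          (fun x hx => ⟨hx, hy⟩)
      have hftc := intervalIntegral.integral_eq_sub_of_hasDeriv_right_of_le h01
        (f := fun x => γ x y * (q t x y * F1 t x y)) (f' := fun x => CA (x, y))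
        (hgs.mul (hqs.mul hF1s))
        (fun x hx => (((hgxd (x, y) hx hy).mul (hGd (x, y) hx hy))).hasDerivWithinAt)
        (hCAs.intervalIntegrable_of_Icc h01)
      rw [MeasureTheory.integral_Icc_eq_integral_Ioc,
        ← intervalIntegral.integral_of_le h01, hftc]
      simp [(hbc1 y hy).1, (hbc1 y hy).2]
    rw [hswap, MeasureTheory.setIntegral_congr_fun measurableSet_Icc hinner]
    simp
  have hCB0 : ∫ p in Set.Icc (0:ℝ) 1 ×ˢ Set.Icc (0:ℝ) 1, CB p = 0 := by
    have hswap : ∫ p in Set.Icc (0:ℝ) 1 ×ˢ Set.Icc (0:ℝ) 1, CB p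
        = ∫ x in Set.Icc (0:ℝ) 1, ∫ y in Set.Icc (0:ℝ) 1, CB (x, y) := by
      rw [show (∫ p in Set.Icc (0:ℝ) 1 ×ˢ Set.Icc (0:ℝ) 1, CB p)
        = ∫ p, CB p ∂(((volume : Measure ℝ).restrict (Set.Icc (0:ℝ) 1)).prod
          ((volume : Measure ℝ).restrict (Set.Icc (0:ℝ) 1))) from by rw [← hres]]
      exact MeasureTheory.integral_prod CB (hres ▸ hCBi)
    have hinner : ∀ x ∈ Set.Icc (0:ℝ) 1, ∫ y in Set.Icc (0:ℝ) 1, CB (x, y) = 0 := by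
      intro x hx
      have hgs : ContinuousOn (fun y => γ x y) (Set.Icc (0:ℝ) 1) :=
        hγ.continuousOn.comp ((continuous_const.prodMk continuous_id).continuousOn)
          (fun y hy => ⟨hx, hy⟩)
      have hqs : ContinuousOn (fun y => q t x y) (Set.Icc (0:ℝ) 1) :=
        hq.continuousOn.comp
          ((continuous_const.prodMk (continuous_const.prodMk continuous_id)).continuousOn)
          (fun y hy => ⟨trivial, hx, hy⟩)
      have hF2s : ContinuousOn (fun y => F2 t x y) (Set.Icc (0:ℝ) 1) :=
        hF2.continuousOn.comp
          ((continuous_const.prodMk (continuous_const.prodMk continuous_id)).continuousOn)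
          (fun y hy => ⟨trivial, hx, hy⟩)
      have hCBs : ContinuousOn (fun y => CB (x, y)) (Set.Icc (0:ℝ) 1) :=
        hCBc.comp ((continuous_const.prodMk continuous_id).continuousOn)
          (fun y hy => ⟨hx, hy⟩)
      have hftc := intervalIntegral.integral_eq_sub_of_hasDeriv_right_of_le h01
        (f := fun y => γ x y * (q t x y * F2 t x y)) (f' := fun y => CB (x, y))
        (hgs.mul (hqs.mul hF2s))
        (fun y hy => (((hgyd (x, y) hx hy).mul (hHd (x, y) hx hy))).hasDerivWithinAt)
        (hCBs.intervalIntegrable_of_Icc h01)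
      rw [MeasureTheory.integral_Icc_eq_integral_Ioc,
        ← intervalIntegral.integral_of_le h01, hftc]
      simp [(hbc2 x hx).1, (hbc2 x hx).2]
    rw [hswap, MeasureTheory.setIntegral_congr_fun measurableSet_Icc hinner]
    simp
  -- put everything together
  rw [MeasureTheory.integral_congr_ae hI1ae, MeasureTheory.integral_congr_ae hI2ae,
    MeasureTheory.integral_congr_ae hI3ae]
  calc (∫ p in Set.Icc (0:ℝ) 1 ×ˢ Set.Icc (0:ℝ) 1, C1 p)
        - ∫ p in Set.Icc (0:ℝ) 1 ×ˢ Set.Icc (0:ℝ) 1, C2 p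
      = ∫ p in Set.Icc (0:ℝ) 1 ×ˢ Set.Icc (0:ℝ) 1, (C1 p - C2 p) :=
        (MeasureTheory.integral_sub hC1i hC2i).symm
    _ = ∫ p in Set.Icc (0:ℝ) 1 ×ˢ Set.Icc (0:ℝ) 1, (C3 p - (CA p + CB p)) := by
        refine MeasureTheory.integral_congr_ae (Filter.EventuallyEq.of_eq (funext fun p => ?_))
        rw [hC1def, hC2def, hC3def, hCAdef, hCBdef]
        ring
    _ = (∫ p in Set.Icc (0:ℝ) 1 ×ˢ Set.Icc (0:ℝ) 1, C3 p)
        - ∫ p in Set.Icc (0:ℝ) 1 ×ˢ Set.Icc (0:ℝ) 1, (CA p + CB p) :=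
        MeasureTheory.integral_sub hC3i (hCAi.add hCBi)
    _ = ∫ p in Set.Icc (0:ℝ) 1 ×ˢ Set.Icc (0:ℝ) 1, C3 p := by
        rw [MeasureTheory.integral_add hCAi hCBi, hCA0, hCB0]
        ring
end
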